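/- arXiv:2209.12198 — 10 statements merged into one kernel-verified Lean document; each statement's English description precedes it below -/
import Mathlib

section
/- Let a > 0 and s ∈ (0,1). Then a^s = (sin(πs)/π) · ∫₀^∞ λ^{s-1} · a/(a+λ) dλ, where the integral is a Lebesgue integral over (0,∞). -/
open MeasureTheory Real Set

private lemma beta_real (s : ℝ) (hs : 0 < s) (hs1 : s < 1) :
    ∫ x in Ioo (0:ℝ) 1, x ^ (s - 1) * (1 - x) ^ (-s) = π / Real.sin (π * s) := by
  have h1 : (0:ℝ) < 1 - s := by linarith
  have hB := Complex.Gamma_mul_Gamma_eq_betaIntegral (s := (s:ℂ)) (t := (1 - s : ℂ))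
    (by simpa using hs) (by simpa using h1)
  have hR := Complex.Gamma_mul_Gamma_one_sub (s : ℂ)
  rw [hR] at hB
  rw [show (s:ℂ) + (1 - (s:ℂ)) = 1 by ring, Complex.Gamma_one, one_mul] at hB
  have hsin : Complex.sin (↑π * (s:ℂ)) = ((Real.sin (π * s) : ℝ) : ℂ) := by
    rw [← Complex.ofReal_mul, ← Complex.ofReal_sin]
  rw [hsin] at hB
  -- identify the complex beta integral with the real one
  have hint : Complex.betaIntegral (s:ℂ) (1 - s : ℂ) =
      ((∫ x in Ioo (0:ℝ) 1, x ^ (s - 1) * (1 - x) ^ (-s) : ℝ) : ℂ) := by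
    rw [Complex.betaIntegral, intervalIntegral.integral_of_le zero_le_one,
      MeasureTheory.integral_Ioc_eq_integral_Ioo]
    have hcoe : ((∫ x in Ioo (0:ℝ) 1, x ^ (s - 1) * (1 - x) ^ (-s) : ℝ) : ℂ)
        = ∫ x in Ioo (0:ℝ) 1, ((x ^ (s - 1) * (1 - x) ^ (-s) : ℝ) : ℂ) :=
      (integral_ofReal (𝕜 := ℂ)).symm
    rw [hcoe]
    refine MeasureTheory.setIntegral_congr_fun measurableSet_Ioo (fun x hx => ?_)
    obtain ⟨hx0, hx1⟩ := hx
    have h1x : (0:ℝ) ≤ 1 - x := by linarith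
    rw [Complex.ofReal_mul, Complex.ofReal_cpow hx0.le, Complex.ofReal_cpow h1x]
    push_cast
    ring_nf
  rw [hint] at hB
  have h2 : ((π / Real.sin (π * s) : ℝ) : ℂ)
      = ((∫ x in Ioo (0:ℝ) 1, x ^ (s - 1) * (1 - x) ^ (-s) : ℝ) : ℂ) := by
    rw [← hB]; push_cast; ring
  exact_mod_cast h2.symm

private lemma key_int (s : ℝ) (hs : 0 < s) (hs1 : s < 1) :
    ∫ t in Ioi (0:ℝ), t ^ (s - 1) / (1 + t) = π / Real.sin (π * s) := by
  rw [← beta_real s hs hs1]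
  have himg : (fun x : ℝ => x / (1 - x)) '' Ioo 0 1 = Ioi 0 := by
    ext t
    simp only [mem_image, mem_Ioo, mem_Ioi]
    constructor
    · rintro ⟨x, ⟨hx0, hx1⟩, rfl⟩
      have h1x : (0:ℝ) < 1 - x := by linarith
      positivity
    · intro ht
      refine ⟨t / (1 + t), ⟨by positivity, ?_⟩, ?_⟩
      · rw [div_lt_one (by linarith)]; linarith
      · field_simp
        ring
  have hderiv : ∀ x ∈ Ioo (0:ℝ) 1, HasDerivWithinAt (fun x : ℝ => x / (1 - x))
      (1 / (1 - x) ^ 2) (Ioo 0 1) x := by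
    intro x hx
    have hx1 : (1:ℝ) - x ≠ 0 := by intro h; linarith [hx.2]
    have : HasDerivAt (fun x : ℝ => x / (1 - x))
        ((1 * (1 - x) - x * (-1)) / (1 - x) ^ 2) x := by
      exact (hasDerivAt_id x).div ((hasDerivAt_id x).const_sub 1) hx1
    refine this.hasDerivWithinAt.congr_deriv ?_
    ring
  have hinj : InjOn (fun x : ℝ => x / (1 - x)) (Ioo 0 1) := by
    intro x hx y hy hxy
    have hx1 : (1:ℝ) - x ≠ 0 := by intro h; linarith [hx.2]
    have hy1 : (1:ℝ) - y ≠ 0 := by intro h; linarith [hy.2]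
    field_simp at hxy
    linarith [hxy]
  have := MeasureTheory.integral_image_eq_integral_abs_deriv_smul measurableSet_Ioo
    hderiv hinj (fun t => t ^ (s - 1) / (1 + t))
  rw [himg] at this
  rw [this]
  refine MeasureTheory.setIntegral_congr_fun measurableSet_Ioo (fun x hx => ?_)
  obtain ⟨hx0, hx1⟩ := hx
  have h1x : (0:ℝ) < 1 - x := by linarith
  have h1 : |1 / (1 - x) ^ 2| = 1 / (1 - x) ^ 2 := abs_of_pos (by positivity)
  have h2 : (1:ℝ) + x / (1 - x) = 1 / (1 - x) := by field_simp; ring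
  rw [smul_eq_mul, h1, h2, Real.div_rpow hx0.le h1x.le]
  rw [Real.rpow_neg h1x.le]
  have h3 : (1 - x) ^ (s - 1) = (1 - x) ^ s / (1 - x) := by
    rw [Real.rpow_sub h1x, Real.rpow_one]
  rw [h3]
  have h4 : (1 - x) ^ s ≠ 0 := (Real.rpow_pos_of_pos h1x s).ne'
  field_simp

/-- Let `a > 0` and `s ∈ (0,1)`. Then
`a^s = (sin(πs)/π) · ∫₀^∞ λ^{s-1} · a/(a+λ) dλ`. -/
theorem stmt0 (a s : ℝ) (ha : 0 < a) (hs : 0 < s) (hs1 : s < 1) :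
    a ^ s = (Real.sin (Real.pi * s) / Real.pi) *
      ∫ l in Set.Ioi (0 : ℝ), l ^ (s - 1) * (a / (a + l)) := by
  have hsin : 0 < Real.sin (π * s) := by
    apply Real.sin_pos_of_pos_of_lt_pi
    · positivity
    · calc π * s < π * 1 := by apply mul_lt_mul_of_pos_left hs1 Real.pi_pos
        _ = π := mul_one π
  have hscale : (∫ l in Set.Ioi (0:ℝ), l ^ (s - 1) * (a / (a + l)))
      = a ^ s * ∫ t in Ioi (0:ℝ), t ^ (s - 1) / (1 + t) := by
    have h0 := MeasureTheory.integral_comp_mul_left_Ioi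
      (fun l : ℝ => l ^ (s - 1) * (a / (a + l))) 0 ha
    simp only [mul_zero] at h0
    have h5 : (∫ l in Set.Ioi (0:ℝ), l ^ (s - 1) * (a / (a + l)))
        = a * ∫ x in Ioi (0:ℝ), (a * x) ^ (s - 1) * (a / (a + a * x)) := by
      rw [h0, smul_eq_mul, ← mul_assoc, mul_inv_cancel₀ ha.ne', one_mul]
    rw [h5]
    have h6 : (∫ x in Ioi (0:ℝ), (a * x) ^ (s - 1) * (a / (a + a * x)))
        = ∫ x in Ioi (0:ℝ), a ^ (s - 1) • (x ^ (s - 1) / (1 + x)) := by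
      refine MeasureTheory.setIntegral_congr_fun measurableSet_Ioi (fun x hx => ?_)
      have hx0 : (0:ℝ) < x := hx
      rw [smul_eq_mul, Real.mul_rpow ha.le hx0.le]
      have h1 : a + a * x = a * (1 + x) := by ring
      rw [h1]
      have h2 : a / (a * (1 + x)) = 1 / (1 + x) := by
        rw [div_eq_div_iff (by positivity) (by positivity)]; ring
      rw [h2]
      field_simp
    rw [h6, MeasureTheory.integral_smul, smul_eq_mul, ← mul_assoc]
    congr 1
    rw [Real.rpow_sub ha, Real.rpow_one]
    field_simp
  rw [hscale, key_int s hs hs1]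
  field_simp
end

section
/- Let (λ_i)_{i≥1} be a sequence of positive real numbers with Σ_{i=1}^∞ λ_i < ∞, and let 0 < s < 1. Then the identity Σ_{i=1}^∞ λ_i^s = (sin(πs)/π) · ∫₀^∞ λ^{s-1} N(λ) dλ holds as an equality in [0,∞] (in particular, the left-hand side is finite if and only if the integral on the right-hand side is finite). -/
open MeasureTheory Real

section aux
open Set
variable {s : ℝ}

private lemma beta_val (hs : 0 < s) (hs1 : s < 1) :
    ∫ x in (0:ℝ)..1, x ^ (s-1) * (1-x) ^ (-s) = Real.pi / Real.sin (Real.pi * s) := by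
  have h1 : (0:ℝ) < 1 - s := by linarith
  have hB := Complex.Gamma_mul_Gamma_eq_betaIntegral (s := (s:ℂ)) (t := ((1-s:ℝ):ℂ))
    (by simpa using hs) (by simpa using h1)
  rw [show (s:ℂ) + ((1-s:ℝ):ℂ) = 1 by push_cast; ring, Complex.Gamma_one, one_mul] at hB
  have hBeq : Complex.betaIntegral (s:ℂ) ((1-s:ℝ):ℂ)
      = ((∫ x in (0:ℝ)..1, x ^ (s-1) * (1-x) ^ (-s) : ℝ) : ℂ) := by
    rw [Complex.betaIntegral, ← intervalIntegral.integral_ofReal]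
    apply intervalIntegral.integral_congr
    intro x hx
    rw [Set.uIcc_of_le (by norm_num : (0:ℝ) ≤ 1)] at hx
    have hx0 : (0:ℝ) ≤ x := hx.1
    have hx1 : (0:ℝ) ≤ 1 - x := by linarith [hx.2]
    show _ = (((x ^ (s-1) * (1-x) ^ (-s) : ℝ)) : ℂ)
    rw [Complex.ofReal_mul, Complex.ofReal_cpow hx0, Complex.ofReal_cpow hx1]
    push_cast
    rw [show (1:ℂ) - (s:ℂ) - 1 = -(s:ℂ) by ring]
  rw [hBeq, Complex.Gamma_ofReal, Complex.Gamma_ofReal] at hB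
  have := Real.Gamma_mul_Gamma_one_sub (s := s)
  rw [← Complex.ofReal_mul] at hB
  have hre := congrArg Complex.re hB
  simp only [Complex.ofReal_re] at hre
  rw [← hre, this]

private lemma beta_integrable (hs : 0 < s) (hs1 : s < 1) :
    IntegrableOn (fun x : ℝ => x ^ (s-1) * (1-x) ^ (-s)) (Ioo 0 1) := by
  have h1 : (0:ℝ) < 1 - s := by linarith
  have hc := (Complex.betaIntegral_convergent (u := (s:ℂ)) (v := ((1-s:ℝ):ℂ))
    (by simpa using hs) (by simpa using h1)).norm
  have hI : IntegrableOn (fun x : ℝ => ‖(x:ℂ) ^ ((s:ℂ)-1) * (1-(x:ℂ)) ^ (((1-s:ℝ):ℂ)-1)‖)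
      (Ioo 0 1) := by
    rw [intervalIntegrable_iff_integrableOn_Ioo_of_le (by norm_num)] at hc
    exact hc
  refine hI.congr_fun ?_ measurableSet_Ioo
  intro x hx
  show ‖(x:ℂ) ^ ((s:ℂ)-1) * (1-(x:ℂ)) ^ (((1-s:ℝ):ℂ)-1)‖ = _
  rw [norm_mul,
    Complex.norm_cpow_eq_rpow_re_of_pos hx.1,
    (by push_cast; ring : (1:ℂ) - (x:ℂ) = ((1-x:ℝ):ℂ)),
    Complex.norm_cpow_eq_rpow_re_of_pos (by linarith [hx.2])]
  push_cast
  norm_num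

private lemma key_integral (hs : 0 < s) (hs1 : s < 1) {a : ℝ} (ha : 0 < a) :
    ∫⁻ l in Ioi (0:ℝ), ENNReal.ofReal (l ^ (s-1) * (a / (a + l)))
      = ENNReal.ofReal (a ^ s * (Real.pi / Real.sin (Real.pi * s))) := by
  set g : ℝ → ℝ := fun x => a * x / (1 - x) with hg
  have himg : g '' Ioo 0 1 = Ioi 0 := by
    ext l
    constructor
    · rintro ⟨x, hx, rfl⟩
      exact div_pos (mul_pos ha hx.1) (by linarith [hx.2])
    · intro hl
      have hl' : (0:ℝ) < l := hl
      refine ⟨l / (a + l), ⟨div_pos hl' (by linarith), ?_⟩, ?_⟩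
      · rw [div_lt_one (by linarith)]; linarith
      · show a * (l / (a + l)) / (1 - l / (a + l)) = l
        have hal : a + l ≠ 0 := by positivity
        field_simp
        rw [add_sub_cancel_right, div_self ha.ne']
  have hderiv : ∀ x ∈ Ioo (0:ℝ) 1, HasDerivWithinAt g (a / (1-x)^2) (Ioo 0 1) x := by
    intro x hx
    have hne : (1:ℝ) - x ≠ 0 := by intro h; nlinarith [hx.2]
    have h1 : HasDerivAt (fun x : ℝ => a * x) a x := by
      simpa using (hasDerivAt_id x).const_mul a
    have h2 : HasDerivAt (fun x : ℝ => 1 - x) (-1) x := by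
      simpa using ((hasDerivAt_id x).const_sub 1)
    have := h1.div h2 hne
    rw [show a / (1-x)^2 = (a * (1 - x) - a * x * -1) / (1 - x) ^ 2 by ring]
    exact this.hasDerivWithinAt
  have hinj : InjOn g (Ioo 0 1) := by
    intro x hx y hy h
    have hx' : (1:ℝ) - x ≠ 0 := by intro h'; nlinarith [hx.2]
    have hy' : (1:ℝ) - y ≠ 0 := by intro h'; nlinarith [hy.2]
    simp only [hg] at h
    rw [div_eq_div_iff hx' hy'] at h
    nlinarith [h]
  have hpt : ∀ x ∈ Ioo (0:ℝ) 1,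
      |a / (1-x)^2| • ((fun l => l ^ (s-1) * (a / (a + l))) (g x))
        = a ^ s * (x ^ (s-1) * (1-x) ^ (-s)) := by
    intro x hx
    have hu : (0:ℝ) < 1 - x := by linarith [hx.2]
    have hx0 : (0:ℝ) < x := hx.1
    have hgx : a + g x = a / (1 - x) := by
      simp only [hg]; field_simp; ring
    have hfrac : a / (a + g x) = 1 - x := by
      rw [hgx]; field_simp
    have hgpow : (g x) ^ (s-1) = a ^ (s-1) * x ^ (s-1) * (1-x) ^ (1-s) := by
      simp only [hg]
      rw [div_rpow (by positivity) hu.le, mul_rpow ha.le hx0.le,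
        show (1:ℝ)-s = -(s-1) by ring, Real.rpow_neg hu.le, div_eq_mul_inv]
    simp only [smul_eq_mul]
    rw [hfrac, hgpow, abs_of_pos (by positivity : (0:ℝ) < a / (1-x)^2)]
    have has : a ^ (s-1) = a ^ s / a := by
      rw [Real.rpow_sub ha, Real.rpow_one]
    have hus : (1-x) ^ (-s) = ((1-x) ^ s)⁻¹ := Real.rpow_neg hu.le s
    have hus1 : (1-x) ^ (1-s) = (1-x) / (1-x) ^ s := by
      rw [Real.rpow_sub hu, Real.rpow_one]
    have hup : (0:ℝ) < (1-x) ^ s := Real.rpow_pos_of_pos hu s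
    rw [has, hus, hus1]
    field_simp
  have hbeta := beta_integrable hs hs1
  have hint : IntegrableOn (fun l : ℝ => l ^ (s-1) * (a / (a + l))) (Ioi 0) := by
    rw [← himg,
      integrableOn_image_iff_integrableOn_abs_deriv_smul measurableSet_Ioo hderiv hinj]
    have h2 : IntegrableOn (fun x : ℝ => a ^ s * (x ^ (s-1) * (1-x) ^ (-s))) (Ioo 0 1) :=
      hbeta.const_mul (a ^ s)
    exact h2.congr_fun (fun x hx => (hpt x hx).symm) measurableSet_Ioo
  have hval : ∫ l in Ioi (0:ℝ), l ^ (s-1) * (a / (a + l))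
      = a ^ s * (Real.pi / Real.sin (Real.pi * s)) := by
    rw [← himg, integral_image_eq_integral_abs_deriv_smul measurableSet_Ioo hderiv hinj,
      setIntegral_congr_fun measurableSet_Ioo hpt, integral_const_mul,
      ← integral_Ioc_eq_integral_Ioo, ← intervalIntegral.integral_of_le zero_le_one,
      beta_val hs hs1]
  rw [← ofReal_integral_eq_lintegral_ofReal hint ?_, hval]
  filter_upwards [self_mem_ae_restrict measurableSet_Ioi] with l hl
  have : (0:ℝ) < l := hl
  positivity
end aux

/-- For a summable sequence of positive reals `(λ_i)` and `0 < s < 1`,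
`Σ λ_i^s = (sin(πs)/π) · ∫₀^∞ λ^{s-1} N(λ) dλ` as an identity in `[0,∞]`,
where `N(λ) = Σ λ_i/(λ_i+λ)` is the effective dimension. -/
theorem stmt1 (lam : ℕ → ℝ) (hpos : ∀ i, 0 < lam i) (hsum : Summable lam)
    (s : ℝ) (hs : 0 < s) (hs1 : s < 1) :
    ∑' i, ENNReal.ofReal (lam i ^ s)
      = ENNReal.ofReal (Real.sin (Real.pi * s) / Real.pi) *
        ∫⁻ l in Set.Ioi (0 : ℝ),
          ENNReal.ofReal (l ^ (s - 1) * ∑' i, lam i / (lam i + l)) := by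
  have hπ := Real.pi_pos
  have hsin : 0 < Real.sin (Real.pi * s) :=
    Real.sin_pos_of_pos_of_lt_pi (by positivity) (by nlinarith)
  have hmeas : ∀ i : ℕ,
      Measurable (fun l : ℝ => ENNReal.ofReal (l ^ (s-1) * (lam i / (lam i + l)))) := by
    intro i
    exact ((measurable_id.pow measurable_const).mul
      (measurable_const.div (measurable_const.add measurable_id))).ennreal_ofReal
  have hcong : (∫⁻ l in Set.Ioi (0:ℝ),
        ENNReal.ofReal (l ^ (s-1) * ∑' i, lam i / (lam i + l)))
      = ∑' i, ∫⁻ l in Set.Ioi (0:ℝ),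
        ENNReal.ofReal (l ^ (s-1) * (lam i / (lam i + l))) := by
    rw [← lintegral_tsum (fun i => (hmeas i).aemeasurable)]
    refine setLIntegral_congr_fun measurableSet_Ioi (fun l hl => ?_)
    have hl' : (0:ℝ) < l := hl
    have hsum2 : Summable (fun i => lam i / (lam i + l)) := by
      refine Summable.of_nonneg_of_le
        (fun i => div_nonneg (hpos i).le (add_nonneg (hpos i).le hl'.le))
        (fun i => ?_) (hsum.div_const l)
      exact div_le_div_of_nonneg_left (hpos i).le hl' (le_add_of_nonneg_left (hpos i).le)
    rw [← tsum_mul_left,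
      ENNReal.ofReal_tsum_of_nonneg (fun i =>
        mul_nonneg (Real.rpow_nonneg hl'.le _)
          (div_nonneg (hpos i).le (add_nonneg (hpos i).le hl'.le))) (hsum2.mul_left _)]
  rw [hcong, tsum_congr (fun i => key_integral hs hs1 (hpos i)), ← ENNReal.tsum_mul_left]
  refine tsum_congr fun i => ?_
  rw [← ENNReal.ofReal_mul (by positivity)]
  congr 1
  field_simp
end

section
/- Let (λ_i)_{i≥1} be a sequence of positive real numbers with Σ_{i=1}^∞ λ_i < ∞, and let 0 < s < 1. If Σ_{i=1}^∞ λ_i^s < ∞, then for every λ > 0 one has N(λ) ≤ (π/sin(πs)) · (Σ_{i=1}^∞ λ_i^s) · λ^{-s}; in particular N(λ) = O(λ^{-s}) as λ ↓ 0. -/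
open MeasureTheory Real

/-- If `Σ λ_i^s < ∞` then the effective dimension satisfies
`N(λ) ≤ (π/sin(πs)) · (Σ λ_i^s) · λ^{-s}` for every `λ > 0`. -/
theorem stmt2 (lam : ℕ → ℝ) (hpos : ∀ i, 0 < lam i) (hsum : Summable lam)
    (s : ℝ) (hs : 0 < s) (hs1 : s < 1)
    (hssum : Summable fun i => lam i ^ s) :
    ∀ l : ℝ, 0 < l →
      (∑' i, lam i / (lam i + l))
        ≤ (Real.pi / Real.sin (Real.pi * s)) * (∑' i, lam i ^ s) * l ^ (-s) := by
  intro l hl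
  have hsin : 0 < Real.sin (Real.pi * s) := by
    apply Real.sin_pos_of_pos_of_lt_pi
    · positivity
    · nlinarith [Real.pi_pos]
  have hC : (1 : ℝ) ≤ Real.pi / Real.sin (Real.pi * s) := by
    rw [le_div_iff₀ hsin]
    have := Real.sin_le_one (Real.pi * s)
    nlinarith [Real.pi_gt_three]
  -- pointwise bound
  have hpt : ∀ i, lam i / (lam i + l) ≤ lam i ^ s * l ^ (-s) := by
    intro i
    have hli := hpos i
    have key : lam i / (lam i + l) ≤ (lam i / l) ^ s := by
      rcases le_or_gt (lam i) l with h | h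
      · have h1 : lam i / (lam i + l) ≤ lam i / l := by
          apply div_le_div_of_nonneg_left hli.le hl
          linarith
        have h2 : lam i / l ≤ (lam i / l) ^ s := by
          have hx0 : 0 < lam i / l := div_pos hli hl
          have hx1 : lam i / l ≤ 1 := (div_le_one hl).mpr h
          calc lam i / l = (lam i / l) ^ (1 : ℝ) := (Real.rpow_one _).symm
            _ ≤ (lam i / l) ^ s :=
              Real.rpow_le_rpow_of_exponent_ge hx0 hx1 hs1.le
        linarith
      · have h1 : lam i / (lam i + l) ≤ 1 := by
          rw [div_le_one (by linarith)]; linarith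
        have h2 : (1 : ℝ) ≤ (lam i / l) ^ s := by
          have hx : (1:ℝ) ≤ lam i / l := (one_le_div hl).mpr h.le
          calc (1:ℝ) = (1:ℝ) ^ s := (Real.one_rpow s).symm
            _ ≤ (lam i / l) ^ s := Real.rpow_le_rpow zero_le_one hx hs.le
        linarith
    calc lam i / (lam i + l) ≤ (lam i / l) ^ s := key
      _ = lam i ^ s * l ^ (-s) := by
        rw [Real.div_rpow hli.le hl.le, Real.rpow_neg hl.le, div_eq_mul_inv]
  have hsum2 : Summable fun i => lam i ^ s * l ^ (-s) := hssum.mul_right _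
  have hsum1 : Summable fun i => lam i / (lam i + l) := by
    exact Summable.of_nonneg_of_le (fun i => div_nonneg (hpos i).le (by linarith [hpos i])) hpt hsum2
  calc (∑' i, lam i / (lam i + l)) ≤ ∑' i, lam i ^ s * l ^ (-s) :=
        Summable.tsum_le_tsum hpt hsum1 hsum2
    _ = (∑' i, lam i ^ s) * l ^ (-s) := tsum_mul_right
    _ ≤ (Real.pi / Real.sin (Real.pi * s)) * (∑' i, lam i ^ s) * l ^ (-s) := by
        have h1 : 0 ≤ (∑' i, lam i ^ s) := tsum_nonneg fun i => Real.rpow_nonneg (hpos i).le _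
        have h2 : 0 ≤ l ^ (-s) := Real.rpow_nonneg hl.le _
        have := mul_le_mul_of_nonneg_right
          (mul_le_mul_of_nonneg_right hC h1) h2
        linarith [this, one_mul ((∑' i, lam i ^ s) * l ^ (-s))]
end

section
/- Let (λ_i)_{i≥1} be a sequence of positive real numbers with Σ_{i=1}^∞ λ_i < ∞, and let 0 < s < 1. If there exist constants C > 0 and δ > 0 such that N(λ) ≤ C·λ^{-s} for all λ ∈ (0, δ], then for every ε > 0 one has Σ_{i=1}^∞ λ_i^{s+ε} < ∞. -/
open MeasureTheory Real

/-- If the effective dimension satisfies `N(λ) ≤ C·λ^{-s}` for `λ ∈ (0,δ]`,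
then `Σ λ_i^{s+ε} < ∞` for every `ε > 0`. -/
theorem stmt3 (lam : ℕ → ℝ) (hpos : ∀ i, 0 < lam i) (hsum : Summable lam)
    (s : ℝ) (hs : 0 < s) (hs1 : s < 1)
    (C δ : ℝ) (hC : 0 < C) (hδ : 0 < δ)
    (hN : ∀ l : ℝ, 0 < l → l ≤ δ →
      (∑' i, lam i / (lam i + l)) ≤ C * l ^ (-s)) :
    ∀ ε : ℝ, 0 < ε → Summable fun i => lam i ^ (s + ε) := by
  intro ε hε
  -- counting bound: any finite set of indices with `l ≤ lam i` has card ≤ 2*C*l^(-s)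
  have key : ∀ l : ℝ, 0 < l → l ≤ δ → ∀ F : Finset ℕ, (∀ i ∈ F, l ≤ lam i) →
      (F.card : ℝ) ≤ 2 * C * l ^ (-s) := by
    intro l hl hlδ F hF
    have hsuml : Summable (fun i => lam i / (lam i + l)) := by
      apply Summable.of_nonneg_of_le (fun i => div_nonneg (hpos i).le (by linarith [hpos i])) (fun i => ?_) (hsum.div_const l)
      have h1 : (0:ℝ) < l := hl
      have h2 : l ≤ lam i + l := by linarith [hpos i]
      exact div_le_div_of_nonneg_left (hpos i).le hl h2
    have h1 : (F.card : ℝ) * (1 / 2) ≤ ∑ i ∈ F, lam i / (lam i + l) := by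
      have := Finset.card_nsmul_le_sum F (fun i => lam i / (lam i + l)) (1/2) ?side
      · simpa [nsmul_eq_mul] using this
      case side =>
        intro i hi
        rw [le_div_iff₀ (by linarith [hpos i])]
        have := hF i hi
        linarith [hpos i]
    have h2 : ∑ i ∈ F, lam i / (lam i + l) ≤ C * l ^ (-s) :=
      le_trans (Summable.sum_le_tsum F (fun i _ => div_nonneg (hpos i).le (by linarith [hpos i])) hsuml) (hN l hl hlδ)
    linarith
  -- the top part is finite
  have hfinδ : {i | δ ≤ lam i}.Finite := by
    have h1 : ∀ᶠ i in Filter.atTop, lam i < δ :=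
      hsum.tendsto_atTop_zero.eventually (gt_mem_nhds hδ)
    rw [← Nat.cofinite_eq_atTop] at h1
    simpa [not_lt] using Filter.eventually_cofinite.mp h1
  set Tf := hfinδ.toFinset with hTf
  -- the shell index
  have hex : ∀ i, ∃ k : ℕ, δ / 2 ^ (k + 1) < lam i := by
    intro i
    obtain ⟨k, hk⟩ := pow_unbounded_of_one_lt (δ / lam i) (one_lt_two (α := ℝ))
    refine ⟨k, ?_⟩
    have h2 : (0:ℝ) < 2 ^ (k+1) := by positivity
    rw [div_lt_iff₀ h2]
    have : δ < lam i * 2 ^ k := by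
      rw [div_lt_iff₀ (hpos i)] at hk; linarith
    have h3 : lam i * 2 ^ k ≤ lam i * 2 ^ (k+1) := by
      have h4 : (2:ℝ) ^ k ≤ 2 ^ (k+1) := pow_le_pow_right₀ (by norm_num) (Nat.le_succ k)
      exact mul_le_mul_of_nonneg_left h4 (hpos i).le
    linarith
  set κ : ℕ → ℕ := fun i => Nat.find (hex i) with hκ
  have hκ1 : ∀ i, δ / 2 ^ (κ i + 1) < lam i := fun i => Nat.find_spec (hex i)
  have hκ2 : ∀ i, lam i ≤ δ → lam i ≤ δ / 2 ^ (κ i) := by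
    intro i hi
    rcases Nat.eq_zero_or_pos (κ i) with h0 | h0
    · rw [h0]; simpa using hi
    · obtain ⟨m, hm⟩ := Nat.exists_eq_succ_of_ne_zero h0.ne'
      have hmlt : m < κ i := by rw [hm]; exact Nat.lt_succ_self m
      have hmin : ¬ (δ / 2 ^ (m + 1) < lam i) := Nat.find_min (hex i) hmlt
      rw [hm]
      exact not_lt.mp hmin
  -- geometric majorant
  set g : ℕ → ℝ := fun k => 2 * C * (δ / 2 ^ (k + 1)) ^ (-s) * (δ / 2 ^ k) ^ (s + ε)
    with hgdef
  have hg0 : ∀ k, 0 ≤ g k := by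
    intro k; rw [hgdef]; positivity
  have grec : ∀ k, g (k + 1) = g k * ((1/2 : ℝ) ^ ε) := by
    intro k
    have e1 : δ / 2 ^ (k + 2) = (δ / 2 ^ (k + 1)) * (1/2) := by ring
    have e2 : δ / 2 ^ (k + 1) = (δ / 2 ^ k) * (1/2) := by ring
    have p1 : (0:ℝ) ≤ δ / 2 ^ (k+1) := by positivity
    have p2 : (0:ℝ) ≤ δ / 2 ^ k := by positivity
    have p3 : (0:ℝ) ≤ (1:ℝ)/2 := by norm_num
    calc g (k + 1) = 2 * C * ((δ / 2 ^ (k + 1)) * (1/2)) ^ (-s)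
          * ((δ / 2 ^ k) * (1/2)) ^ (s + ε) := by rw [hgdef, ← e1, ← e2]
      _ = 2 * C * ((δ / 2 ^ (k + 1)) ^ (-s) * ((1:ℝ)/2) ^ (-s))
          * ((δ / 2 ^ k) ^ (s + ε) * ((1:ℝ)/2) ^ (s + ε)) := by
            rw [Real.mul_rpow p1 p3, Real.mul_rpow p2 p3]
      _ = g k * (((1:ℝ)/2) ^ (-s) * ((1:ℝ)/2) ^ (s + ε)) := by rw [hgdef]; ring
      _ = g k * ((1/2 : ℝ) ^ ε) := by
            rw [← Real.rpow_add (by norm_num : (0:ℝ) < 1/2)]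
            ring_nf
  have hclosed : ∀ k, g k = g 0 * ((1/2 : ℝ) ^ ε) ^ k := by
    intro k
    induction k with
    | zero => simp
    | succ n ih => rw [grec, ih, pow_succ]; ring
  have hr0 : (0:ℝ) ≤ (1/2 : ℝ) ^ ε := by positivity
  have hr1 : (1/2 : ℝ) ^ ε < 1 :=
    Real.rpow_lt_one (by norm_num) (by norm_num) hε
  have hgsum : Summable g := by
    have := (summable_geometric_of_lt_one hr0 hr1).mul_left (g 0)
    exact this.congr (fun k => (hclosed k).symm)
  -- main bound
  apply summable_of_sum_range_le (c := (∑ i ∈ Tf, lam i ^ (s + ε)) + ∑' k, g k)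
    (fun i => Real.rpow_nonneg (hpos i).le _)
  intro n
  set F := Finset.range n with hF
  have hsplit : ∑ i ∈ F ∩ Tf, lam i ^ (s + ε) + ∑ i ∈ F \ Tf, lam i ^ (s + ε)
      = ∑ i ∈ F, lam i ^ (s + ε) := Finset.sum_inter_add_sum_sdiff F Tf _
  have part1 : ∑ i ∈ F ∩ Tf, lam i ^ (s + ε) ≤ ∑ i ∈ Tf, lam i ^ (s + ε) :=
    Finset.sum_le_sum_of_subset_of_nonneg (Finset.inter_subset_right)
      (fun i _ _ => Real.rpow_nonneg (hpos i).le _)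
  have part2 : ∑ i ∈ F \ Tf, lam i ^ (s + ε) ≤ ∑' k, g k := by
    have step1 : ∑ i ∈ F \ Tf, lam i ^ (s + ε)
        ≤ ∑ i ∈ F \ Tf, (δ / 2 ^ (κ i)) ^ (s + ε) := by
      apply Finset.sum_le_sum
      intro i hi
      have hiT : lam i < δ := by
        have := (Finset.mem_sdiff.mp hi).2
        rw [hTf, Set.Finite.mem_toFinset] at this
        exact not_le.mp this
      exact Real.rpow_le_rpow (hpos i).le (hκ2 i hiT.le) (by positivity)
    have step2 : ∑ i ∈ F \ Tf, (δ / 2 ^ (κ i)) ^ (s + ε)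
        = ∑ k ∈ (F \ Tf).image κ,
            ((F \ Tf).filter (fun i => κ i = k)).card • (δ / 2 ^ k) ^ (s + ε) :=
      Finset.sum_comp (fun k => (δ / 2 ^ k) ^ (s + ε)) κ
    have step3 : ∑ k ∈ (F \ Tf).image κ,
          ((F \ Tf).filter (fun i => κ i = k)).card • (δ / 2 ^ k) ^ (s + ε)
        ≤ ∑ k ∈ (F \ Tf).image κ, g k := by
      apply Finset.sum_le_sum
      intro k _
      rw [nsmul_eq_mul]
      have hl : (0:ℝ) < δ / 2 ^ (k + 1) := by positivity
      have hlδ : δ / 2 ^ (k + 1) ≤ δ := by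
        apply div_le_self hδ.le
        exact one_le_pow₀ (by norm_num)
      have hcard := key _ hl hlδ ((F \ Tf).filter (fun i => κ i = k)) ?mem
      case mem =>
        intro i hi
        have := (Finset.mem_filter.mp hi).2
        have h1 := hκ1 i
        rw [this] at h1
        exact h1.le
      rw [hgdef]
      have hnn : (0:ℝ) ≤ (δ / 2 ^ k) ^ (s + ε) := by positivity
      calc (((F \ Tf).filter (fun i => κ i = k)).card : ℝ) * (δ / 2 ^ k) ^ (s + ε)
          ≤ (2 * C * (δ / 2 ^ (k + 1)) ^ (-s)) * (δ / 2 ^ k) ^ (s + ε) := by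
            exact mul_le_mul_of_nonneg_right hcard hnn
        _ = 2 * C * (δ / 2 ^ (k + 1)) ^ (-s) * (δ / 2 ^ k) ^ (s + ε) := by ring
    have step4 : ∑ k ∈ (F \ Tf).image κ, g k ≤ ∑' k, g k :=
      Summable.sum_le_tsum _ (fun k _ => hg0 k) hgsum
    calc ∑ i ∈ F \ Tf, lam i ^ (s + ε) ≤ _ := step1
      _ = _ := step2
      _ ≤ _ := step3
      _ ≤ _ := step4
  linarith
end

section
/- Let (λ_i)_{i≥1} be a sequence of positive real numbers with Σ_{i=1}^∞ λ_i < ∞, let 0 < s < 1, and suppose there is a constant C > 0 such that λ_i ≤ C·i^{-1/s} for all i ≥ 1. Then for every λ > 0 one has N(λ) ≤ C^s · λ^{-s} · ∫₀^∞ (1+u^{1/s})^{-1} du, where the integral ∫₀^∞ (1+u^{1/s})^{-1} du is finite; in particular N(λ) = O(λ^{-s}) as λ ↓ 0. -/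
open MeasureTheory Real

lemma stmt4_integrable {s : ℝ} (hs : 0 < s) (hs1 : s < 1) :
    IntegrableOn (fun u : ℝ => (1 + u ^ (1 / s))⁻¹) (Set.Ioi 0) := by
  have hsinv : (1 : ℝ) < 1 / s := (one_lt_one_div hs hs1)
  have hcont : Continuous fun u : ℝ => (1 : ℝ) + u ^ (1 / s) :=
    continuous_const.add (continuous_rpow_const (by positivity))
  have hmeas : Measurable fun u : ℝ => (1 + u ^ (1 / s))⁻¹ := hcont.measurable.inv
  have h1 : IntegrableOn (fun u : ℝ => (1 + u ^ (1 / s))⁻¹) (Set.Ioc 0 1) := by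
    have hc : IntegrableOn (fun _ : ℝ => (1 : ℝ)) (Set.Ioc (0:ℝ) 1) :=
      integrableOn_const (by simp)
    refine hc.mono' hmeas.aestronglyMeasurable ?_
    filter_upwards [ae_restrict_mem measurableSet_Ioc] with u hu
    have h0 : (0 : ℝ) ≤ u ^ (1 / s) := rpow_nonneg hu.1.le _
    rw [Real.norm_eq_abs, abs_inv, abs_of_nonneg (by linarith)]
    rw [inv_le_one_iff₀]
    right; linarith
  have h2 : IntegrableOn (fun u : ℝ => (1 + u ^ (1 / s))⁻¹) (Set.Ioi 1) := by
    have hbase : IntegrableOn (fun u : ℝ => u ^ (-(1/s))) (Set.Ioi (1:ℝ)) :=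
      integrableOn_Ioi_rpow_of_lt (by linarith) one_pos
    refine hbase.mono' hmeas.aestronglyMeasurable ?_
    filter_upwards [ae_restrict_mem measurableSet_Ioi] with u hu
    have hu1 : (1 : ℝ) < u := hu
    have hp : (0 : ℝ) < u ^ (1 / s) := rpow_pos_of_pos (by linarith) _
    rw [Real.norm_eq_abs, abs_inv, abs_of_nonneg (by linarith), rpow_neg (by linarith)]
    exact inv_anti₀ hp (by linarith)
  have : IntegrableOn (fun u : ℝ => (1 + u ^ (1 / s))⁻¹) (Set.Ioc 0 1 ∪ Set.Ioi 1) :=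
    h1.union h2
  refine this.mono_set ?_
  intro x hx
  rcases le_or_gt x 1 with h | h
  · exact Or.inl ⟨hx, h⟩
  · exact Or.inr h

/-- If `λ_i ≤ C·i^{-1/s}` for all `i ≥ 1` (here `lam i` denotes `λ_{i+1}`),
then `N(λ) ≤ C^s · λ^{-s} · ∫₀^∞ (1+u^{1/s})^{-1} du` for every `λ > 0`,
and the integral `∫₀^∞ (1+u^{1/s})^{-1} du` is finite. -/
theorem stmt4 (lam : ℕ → ℝ) (hpos : ∀ i, 0 < lam i) (hsum : Summable lam)
    (s : ℝ) (hs : 0 < s) (hs1 : s < 1)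
    (C : ℝ) (hC : 0 < C)
    (hbd : ∀ i : ℕ, lam i ≤ C * ((i : ℝ) + 1) ^ (-(1 / s))) :
    IntegrableOn (fun u : ℝ => (1 + u ^ (1 / s))⁻¹) (Set.Ioi 0) ∧
      ∀ l : ℝ, 0 < l →
        (∑' i, lam i / (lam i + l))
          ≤ C ^ s * l ^ (-s) * ∫ u in Set.Ioi (0 : ℝ), (1 + u ^ (1 / s))⁻¹ := by
  have hint := stmt4_integrable hs hs1
  refine ⟨hint, fun l hl => ?_⟩
  set f : ℝ → ℝ := fun u : ℝ => (1 + u ^ (1 / s))⁻¹ with hf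
  have hfnonneg : ∀ u : ℝ, 0 ≤ u → 0 ≤ f u := by
    intro u hu
    have : (0:ℝ) ≤ u ^ (1/s) := rpow_nonneg hu _
    positivity
  set a : ℝ := (l / C) ^ s with ha
  have hlC : (0:ℝ) < l / C := div_pos hl hC
  have ha0 : 0 < a := rpow_pos_of_pos hlC _
  have haroot : a ^ (1 / s) = l / C := by
    rw [ha, one_div, rpow_rpow_inv hlC.le hs.ne']
  set I : ℝ := ∫ u in Set.Ioi (0 : ℝ), f u with hI
  have hInonneg : 0 ≤ I := by
    refine setIntegral_nonneg measurableSet_Ioi fun u hu => hfnonneg u (le_of_lt hu)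
  -- antitone on [0, ∞)
  have hanti : ∀ x y : ℝ, 0 ≤ x → x ≤ y → f y ≤ f x := by
    intro x y hx hxy
    have h1 : x ^ (1/s) ≤ y ^ (1/s) := rpow_le_rpow hx hxy (by positivity)
    have h2 : (0:ℝ) < 1 + x ^ (1/s) := by
      have := rpow_nonneg hx (1/s); linarith
    exact inv_anti₀ h2 (by linarith)
  -- termwise bound
  have hterm : ∀ i : ℕ, lam i / (lam i + l) ≤ f (a * ((i : ℝ) + 1)) := by
    intro i
    have hi1 : (0:ℝ) < (i : ℝ) + 1 := by positivity
    set b : ℝ := C * ((i : ℝ) + 1) ^ (-(1 / s)) with hb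
    have hr : (0:ℝ) < ((i : ℝ) + 1) ^ (1/s) := rpow_pos_of_pos hi1 _
    have hb0 : 0 < b := by
      have : (0:ℝ) < ((i : ℝ) + 1) ^ (-(1/s)) := rpow_pos_of_pos hi1 _
      positivity
    have step1 : lam i / (lam i + l) ≤ b / (b + l) := by
      rw [div_le_div_iff₀ (by linarith [hpos i]) (by linarith)]
      nlinarith [hbd i, hpos i]
    have key : (a * ((i:ℝ) + 1)) ^ (1/s) = (l / C) * ((i:ℝ)+1) ^ (1/s) := by
      rw [mul_rpow ha0.le hi1.le, haroot]
    have hbinv : ((i : ℝ) + 1) ^ (-(1/s)) = (((i : ℝ) + 1) ^ (1/s))⁻¹ := by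
      rw [rpow_neg hi1.le]
    have step2 : b / (b + l) = f (a * ((i:ℝ) + 1)) := by
      simp only [hf, key, hb, hbinv]
      rw [div_eq_iff (by positivity)]
      have hr' : ((i : ℝ) + 1) ^ (1/s) ≠ 0 := hr.ne'
      field_simp
    calc lam i / (lam i + l) ≤ b / (b + l) := step1
      _ = f (a * ((i:ℝ) + 1)) := step2
  -- summability
  have hsummable : Summable fun i => lam i / (lam i + l) := by
    refine Summable.of_nonneg_of_le
      (fun i => div_nonneg (hpos i).le (by linarith [hpos i]))
      (fun i => ?_) (hsum.mul_right l⁻¹)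
    rw [div_eq_mul_inv]
    exact mul_le_mul_of_nonneg_left (inv_anti₀ hl (by linarith [hpos i])) (hpos i).le
  -- partial sums
  have hpartial : ∀ n : ℕ, ∑ i ∈ Finset.range n, lam i / (lam i + l) ≤ a⁻¹ * I := by
    intro n
    have hanti' : AntitoneOn (fun u : ℝ => f (a * u)) (Set.Icc (0:ℝ) (0 + n)) := by
      intro x hx y hy hxy
      have hx0 : (0:ℝ) ≤ x := hx.1
      exact hanti (a * x) (a * y) (by positivity)
        (mul_le_mul_of_nonneg_left hxy ha0.le)
    have hsl := hanti'.sum_le_integral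
    have hcomp : (∫ x in (0:ℝ)..(0 + (n:ℝ)), f (a * x)) = a⁻¹ • ∫ x in (a * 0)..(a * (0 + (n:ℝ))), f x :=
      intervalIntegral.integral_comp_mul_left f ha0.ne'
    have hioc : (∫ x in (a * 0)..(a * (0 + (n:ℝ))), f x) ≤ I := by
      rw [mul_zero, zero_add, intervalIntegral.integral_of_le (by positivity)]
      refine setIntegral_mono_set hint ?_
        (HasSubset.Subset.eventuallyLE Set.Ioc_subset_Ioi_self)
      filter_upwards [ae_restrict_mem measurableSet_Ioi] with u hu
      exact hfnonneg u (le_of_lt hu)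
    have hstep : ∑ i ∈ Finset.range n, f (a * ((i:ℝ) + 1)) ≤ a⁻¹ * I := by
      calc ∑ i ∈ Finset.range n, f (a * ((i:ℝ) + 1))
          = ∑ i ∈ Finset.range n, f (a * ((0:ℝ) + ((i:ℕ) + 1 : ℕ))) := by
            refine Finset.sum_congr rfl fun i _ => ?_
            push_cast
            ring_nf
        _ ≤ ∫ x in (0:ℝ)..(0 + (n:ℝ)), f (a * x) := hsl
        _ = a⁻¹ • ∫ x in (a * 0)..(a * (0 + (n:ℝ))), f x := hcomp
        _ ≤ a⁻¹ * I := by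
            rw [smul_eq_mul]
            exact mul_le_mul_of_nonneg_left hioc (by positivity)
    calc ∑ i ∈ Finset.range n, lam i / (lam i + l)
        ≤ ∑ i ∈ Finset.range n, f (a * ((i:ℝ) + 1)) :=
          Finset.sum_le_sum fun i _ => hterm i
      _ ≤ a⁻¹ * I := hstep
  have htsum : (∑' i, lam i / (lam i + l)) ≤ a⁻¹ * I :=
    Summable.tsum_le_of_sum_range_le hsummable hpartial
  have hainv : a⁻¹ = C ^ s * l ^ (-s) := by
    rw [ha, div_rpow hl.le hC.le, rpow_neg hl.le]
    have : (0:ℝ) < l ^ s := rpow_pos_of_pos hl _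
    have : (0:ℝ) < C ^ s := rpow_pos_of_pos hC _
    field_simp
  rw [← hainv]
  exact htsum
end

section
/- Let (λ_i)_{i≥1} be a non-increasing sequence of positive real numbers with Σ_{i=1}^∞ λ_i < ∞, and let 0 < s < 1. If there exist constants C > 0 and δ > 0 such that N(λ) ≤ C·λ^{-s} for all λ ∈ (0, δ], then there exists a constant C' > 0 such that λ_i ≤ C'·i^{-1/s} for all i ≥ 1; explicitly one may take C' so that λ_i ≤ (C₃ · s^{-s} (1-s)^{s-1})^{1/s} · i^{-1/s} whenever N(λ) ≤ C₃·λ^{-s} holds for all λ ∈ (0, s·λ₁/(1-s)]. -/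
open MeasureTheory Real

lemma stmt5_key (lam : ℕ → ℝ) (hpos : ∀ i, 0 < lam i) (hmono : Antitone lam)
    (hsum : Summable lam) (s : ℝ) (hs : 0 < s) (hs1 : s < 1)
    (C₃ : ℝ) (hC₃ : 0 < C₃)
    (hN : ∀ l : ℝ, 0 < l → l ≤ s * lam 0 / (1 - s) →
        (∑' i, lam i / (lam i + l)) ≤ C₃ * l ^ (-s)) (i : ℕ) :
    lam i ≤ (C₃ * s ^ (-s) * (1 - s) ^ (s - 1)) ^ (1 / s) *
        ((i : ℝ) + 1) ^ (-(1 / s)) := by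
  have h1s : (0:ℝ) < 1 - s := by linarith
  set a := lam i with ha_def
  have ha : 0 < a := hpos i
  set l := s * a / (1 - s) with hl_def
  have hl : 0 < l := by positivity
  have hle : l ≤ s * lam 0 / (1 - s) := by
    have h := hmono (Nat.zero_le i)
    rw [hl_def, div_le_div_iff₀ h1s h1s]
    have h2 := mul_le_mul_of_nonneg_left h hs.le
    exact mul_le_mul_of_nonneg_right h2 h1s.le
  have hal : a + l = a / (1 - s) := by
    rw [hl_def]; field_simp; ring
  have hfrac : a / (a + l) = 1 - s := by
    rw [hal]; field_simp
  have hsummand : Summable (fun j => lam j / (lam j + l)) := by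
    apply Summable.of_nonneg_of_le
      (fun j => le_of_lt (div_pos (hpos j) (by linarith [hpos j])))
      (fun j => ?_) (hsum.div_const l)
    have hj := hpos j
    rw [div_le_div_iff₀ (by linarith) hl]
    nlinarith
  have hsum_lb : ((i : ℝ) + 1) * (1 - s) ≤ ∑' j, lam j / (lam j + l) := by
    have h1 : ∑ j ∈ Finset.range (i + 1), lam j / (lam j + l) ≤
        ∑' j, lam j / (lam j + l) :=
      Summable.sum_le_tsum _ (fun j _ =>
        le_of_lt (div_pos (hpos j) (by linarith [hpos j]))) hsummand
    have h2 : ((i : ℝ) + 1) * (1 - s) ≤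
        ∑ j ∈ Finset.range (i + 1), lam j / (lam j + l) := by
      have hb : ∀ j ∈ Finset.range (i + 1), (1 - s) ≤ lam j / (lam j + l) := by
        intro j hj
        rw [← hfrac]
        have hij : a ≤ lam j := hmono (Nat.lt_succ_iff.mp (Finset.mem_range.mp hj))
        have hjp := hpos j
        rw [div_le_div_iff₀ (by linarith) (by linarith)]
        nlinarith
      calc ((i : ℝ) + 1) * (1 - s) = ∑ _j ∈ Finset.range (i + 1), (1 - s) := by
            simp [mul_comm]; ring
        _ ≤ _ := Finset.sum_le_sum hb
    linarith
  have hmain : ((i : ℝ) + 1) * (1 - s) ≤ C₃ * l ^ (-s) :=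
    hsum_lb.trans (hN l hl hle)
  have hlrw : l ^ (-s) = s ^ (-s) * (1 - s) ^ s * a ^ (-s) := by
    rw [hl_def, show s * a / (1 - s) = (s / (1 - s)) * a by ring,
      Real.mul_rpow (by positivity) ha.le,
      Real.div_rpow hs.le h1s.le, Real.rpow_neg h1s.le s, div_eq_mul_inv, inv_inv]
  have has : (0:ℝ) < a ^ s := Real.rpow_pos_of_pos ha s
  have hcancel : a ^ s * a ^ (-s) = 1 := by
    rw [← Real.rpow_add ha]; simp
  have hi1 : (0:ℝ) < (i : ℝ) + 1 := by positivity
  have hpow : a ^ s ≤ C₃ * s ^ (-s) * (1 - s) ^ (s - 1) * ((i : ℝ) + 1)⁻¹ := by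
    have h3 : a ^ s * (((i : ℝ) + 1) * (1 - s)) ≤ C₃ * s ^ (-s) * (1 - s) ^ s := by
      have := mul_le_mul_of_nonneg_left hmain has.le
      rw [hlrw] at this
      calc a ^ s * (((i : ℝ) + 1) * (1 - s)) ≤
          a ^ s * (C₃ * (s ^ (-s) * (1 - s) ^ s * a ^ (-s))) := by nlinarith
        _ = (a ^ s * a ^ (-s)) * (C₃ * s ^ (-s) * (1 - s) ^ s) := by ring
        _ = C₃ * s ^ (-s) * (1 - s) ^ s := by rw [hcancel, one_mul]
    have h5 : a ^ s ≤ (C₃ * s ^ (-s) * (1 - s) ^ s) / (((i : ℝ) + 1) * (1 - s)) :=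
      (le_div_iff₀ (by positivity)).mpr (by linarith)
    calc a ^ s ≤ _ := h5
      _ = C₃ * s ^ (-s) * (1 - s) ^ (s - 1) * ((i : ℝ) + 1)⁻¹ := by
          rw [show s - 1 = s + (-1) by ring, Real.rpow_add h1s, Real.rpow_neg_one,
            div_eq_mul_inv, mul_inv]
          ring
  have hK : (0:ℝ) < C₃ * s ^ (-s) * (1 - s) ^ (s - 1) :=
    mul_pos (mul_pos hC₃ (Real.rpow_pos_of_pos hs _)) (Real.rpow_pos_of_pos h1s _)
  calc a = (a ^ s) ^ (1 / s) := by
        rw [← Real.rpow_mul ha.le, mul_one_div, div_self hs.ne', Real.rpow_one]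
    _ ≤ (C₃ * s ^ (-s) * (1 - s) ^ (s - 1) * ((i : ℝ) + 1)⁻¹) ^ (1 / s) :=
        Real.rpow_le_rpow has.le hpow (by positivity)
    _ = (C₃ * s ^ (-s) * (1 - s) ^ (s - 1)) ^ (1 / s) *
          ((i : ℝ) + 1) ^ (-(1 / s)) := by
        rw [Real.mul_rpow hK.le (by positivity), Real.inv_rpow hi1.le,
          ← Real.rpow_neg hi1.le]

/-- For a non-increasing summable sequence of positive reals (`lam i` denotes
`λ_{i+1}`, so `lam 0 = λ₁`): if `N(λ) ≤ C·λ^{-s}` on `(0,δ]` then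
`λ_i ≤ C'·i^{-1/s}` for some `C' > 0`; explicitly, if `N(λ) ≤ C₃·λ^{-s}` for
all `λ ∈ (0, s·λ₁/(1-s)]` then `λ_i ≤ (C₃·s^{-s}·(1-s)^{s-1})^{1/s}·i^{-1/s}`. -/
theorem stmt5 (lam : ℕ → ℝ) (hpos : ∀ i, 0 < lam i) (hmono : Antitone lam)
    (hsum : Summable lam) (s : ℝ) (hs : 0 < s) (hs1 : s < 1)
    (C δ : ℝ) (hC : 0 < C) (hδ : 0 < δ)
    (hN : ∀ l : ℝ, 0 < l → l ≤ δ →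
      (∑' i, lam i / (lam i + l)) ≤ C * l ^ (-s)) :
    (∃ C' : ℝ, 0 < C' ∧ ∀ i : ℕ, lam i ≤ C' * ((i : ℝ) + 1) ^ (-(1 / s))) ∧
      ∀ C₃ : ℝ, 0 < C₃ →
        (∀ l : ℝ, 0 < l → l ≤ s * lam 0 / (1 - s) →
            (∑' i, lam i / (lam i + l)) ≤ C₃ * l ^ (-s)) →
        ∀ i : ℕ, lam i ≤ (C₃ * s ^ (-s) * (1 - s) ^ (s - 1)) ^ (1 / s) *
            ((i : ℝ) + 1) ^ (-(1 / s)) := by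
  have h1s : (0:ℝ) < 1 - s := by linarith
  have hM : (0:ℝ) < s * lam 0 / (1 - s) := by
    have := hpos 0; positivity
  set M := s * lam 0 / (1 - s) with hM_def
  have hsummand : ∀ l : ℝ, 0 < l → Summable (fun j => lam j / (lam j + l)) := by
    intro l hl
    apply Summable.of_nonneg_of_le
      (fun j => le_of_lt (div_pos (hpos j) (by linarith [hpos j])))
      (fun j => ?_) (hsum.div_const l)
    have hj := hpos j
    rw [div_le_div_iff₀ (by linarith) hl]
    nlinarith
  constructor
  · -- build a constant working on all of (0, M]
    set C₃ := max C (C * δ ^ (-s) * M ^ s) with hC₃_def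
    have hCC₃ : C ≤ C₃ := le_max_left _ _
    have hC₃pos : 0 < C₃ := lt_of_lt_of_le hC hCC₃
    have hN' : ∀ l : ℝ, 0 < l → l ≤ M →
        (∑' i, lam i / (lam i + l)) ≤ C₃ * l ^ (-s) := by
      intro l hl hlM
      have hlneg : (0:ℝ) < l ^ (-s) := Real.rpow_pos_of_pos hl _
      rcases le_or_gt l δ with h | h
      · calc (∑' i, lam i / (lam i + l)) ≤ C * l ^ (-s) := hN l hl h
          _ ≤ C₃ * l ^ (-s) := by nlinarith
      · have hmonoN : (∑' i, lam i / (lam i + l)) ≤ ∑' i, lam i / (lam i + δ) := by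
          apply Summable.tsum_le_tsum _ (hsummand l hl) (hsummand δ hδ)
          intro j
          have hj := hpos j
          apply div_le_div_of_nonneg_left hj.le (by linarith) (by linarith)
        have h1 : (∑' i, lam i / (lam i + δ)) ≤ C * δ ^ (-s) := hN δ hδ le_rfl
        have hMl : l ^ (-s) ≥ M ^ (-s) :=
          Real.rpow_le_rpow_of_nonpos hl hlM (by linarith)
        have hMs : M ^ s * M ^ (-s) = 1 := by
          rw [← Real.rpow_add hM]; simp
        have hδs : (0:ℝ) < δ ^ (-s) := Real.rpow_pos_of_pos hδ _
        have hMsp : (0:ℝ) < M ^ s := Real.rpow_pos_of_pos hM _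
        calc (∑' i, lam i / (lam i + l)) ≤ C * δ ^ (-s) := hmonoN.trans h1
          _ = C * δ ^ (-s) * M ^ s * M ^ (-s) := by
              rw [mul_assoc, mul_assoc, hMs, mul_one]
          _ ≤ C * δ ^ (-s) * M ^ s * l ^ (-s) :=
              mul_le_mul_of_nonneg_left hMl (mul_pos (mul_pos hC hδs) hMsp).le
          _ ≤ C₃ * l ^ (-s) := by
              have := le_max_right C (C * δ ^ (-s) * M ^ s)
              nlinarith
    refine ⟨(C₃ * s ^ (-s) * (1 - s) ^ (s - 1)) ^ (1 / s), ?_, ?_⟩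
    · exact Real.rpow_pos_of_pos (mul_pos (mul_pos hC₃pos
        (Real.rpow_pos_of_pos hs _)) (Real.rpow_pos_of_pos h1s _)) _
    · exact stmt5_key lam hpos hmono hsum s hs hs1 C₃ hC₃pos hN'
  · intro C₃ hC₃ hN'
    exact stmt5_key lam hpos hmono hsum s hs hs1 C₃ hC₃ hN'
end

section
/- For any real numbers γ₁ > γ₂ > 0 there exists a non-increasing sequence (a_k)_{k≥1} of positive real numbers such that limsup_{k→∞} a_k·k^{γ₂} = 1 and liminf_{k→∞} a_k·k^{γ₁} = 1. In particular, there exists a non-increasing positive sequence (a_k) for which no exponent γ > 0 satisfies a_k ≍ k^{-γ} (i.e., a_k/k^{-γ} bounded away from 0 and ∞). -/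
open Filter Real Topology

/-- For any `γ₁ > γ₂ > 0` there is a non-increasing positive sequence `(a_k)`
with `limsup a_k·k^{γ₂} = 1` and `liminf a_k·k^{γ₁} = 1`; in particular no
exponent `γ > 0` satisfies `a_k ≍ k^{-γ}`. -/
theorem stmt7 (γ₁ γ₂ : ℝ) (h2 : 0 < γ₂) (h21 : γ₂ < γ₁) :
    ∃ a : ℕ → ℝ, (∀ k, 0 < a k) ∧ Antitone a ∧
      Filter.limsup (fun k : ℕ => a k * (k : ℝ) ^ γ₂) Filter.atTop = 1 ∧
      Filter.liminf (fun k : ℕ => a k * (k : ℝ) ^ γ₁) Filter.atTop = 1 ∧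
      ∀ γ : ℝ, 0 < γ →
        ¬ ∃ c C : ℝ, 0 < c ∧
            ∀ k : ℕ, 1 ≤ k → c ≤ a k * (k : ℝ) ^ γ ∧ a k * (k : ℝ) ^ γ ≤ C := by
  set r := γ₁ / γ₂ with hr_def
  have h1 : 0 < γ₁ := h2.trans h21
  have hr : 1 < r := (one_lt_div h2).mpr h21
  have hr0 : 0 < r := zero_lt_one.trans hr
  have hrγ : r * γ₂ = γ₁ := div_mul_cancel₀ γ₁ h2.ne'
  set J : ℕ → ℤ := fun k => ⌊Real.logb r (Real.logb 2 (k+1))⌋ with hJ_def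
  set B : ℕ → ℝ := fun k => (2:ℝ) ^ ((r ^ J k : ℝ)) with hB_def
  set a : ℕ → ℝ := fun k => B k ^ (-γ₁) with ha_def
  have hBpos : ∀ k, 0 < B k := fun k => rpow_pos_of_pos two_pos _
  have hapos : ∀ k, 0 < a k := fun k => rpow_pos_of_pos (hBpos k) _
  -- key block inequality
  have key : ∀ k : ℕ, 1 ≤ k → B k ≤ (k+1:ℝ) ∧ ((k:ℝ)+1) ≤ B k ^ r := by
    intro k hk
    have hk1 : (2:ℝ) ≤ (k:ℝ) + 1 := by
      have : (1:ℝ) ≤ (k:ℝ) := by exact_mod_cast hk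
      linarith
    have hkpos : (0:ℝ) < (k:ℝ) + 1 := by linarith
    set t := Real.logb 2 ((k:ℝ)+1) with ht_def
    have ht1 : 1 ≤ t := by
      have := Real.logb_le_logb_of_le one_lt_two (x := 2) (by norm_num) hk1
      simpa using this
    have ht0 : 0 < t := lt_of_lt_of_le one_pos ht1
    have hfl : ((J k : ℝ)) ≤ Real.logb r t := by
      simpa [hJ_def] using (Int.floor_le (Real.logb r t))
    have hfu : Real.logb r t < (J k : ℝ) + 1 := by
      exact Int.lt_floor_add_one (Real.logb r t)
    have hzpow : (r : ℝ) ^ (J k) = r ^ ((J k : ℝ)) := (Real.rpow_intCast r (J k)).symm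
    have h_rJ_le : (r:ℝ) ^ (J k) ≤ t := by
      rw [hzpow]
      calc r ^ ((J k : ℝ)) ≤ r ^ (Real.logb r t) :=
            Real.rpow_le_rpow_of_exponent_le hr.le hfl
        _ = t := Real.rpow_logb hr0 hr.ne' ht0
    have h_t_le : t ≤ (r:ℝ) ^ (J k) * r := by
      have : t ≤ r ^ ((J k : ℝ) + 1) := by
        calc t = r ^ (Real.logb r t) := (Real.rpow_logb hr0 hr.ne' ht0).symm
          _ ≤ r ^ ((J k : ℝ) + 1) := Real.rpow_le_rpow_of_exponent_le hr.le hfu.le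
      rwa [Real.rpow_add hr0, Real.rpow_one, ← hzpow] at this
    constructor
    · calc B k = 2 ^ ((r ^ J k : ℝ)) := rfl
        _ ≤ (2:ℝ) ^ t := Real.rpow_le_rpow_of_exponent_le one_le_two h_rJ_le
        _ = (k:ℝ) + 1 := Real.rpow_logb two_pos (by norm_num) hkpos
    · calc (k:ℝ) + 1 = (2:ℝ) ^ t := (Real.rpow_logb two_pos (by norm_num) hkpos).symm
        _ ≤ (2:ℝ) ^ ((r ^ J k : ℝ) * r) := Real.rpow_le_rpow_of_exponent_le one_le_two h_t_le
        _ = B k ^ r := Real.rpow_mul (by norm_num) _ _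

  have hJ0 : ∀ k, 0 ≤ J k := by
    intro k
    rcases Nat.eq_zero_or_pos k with h | h
    · simp [hJ_def, h]
    · have hk1 : (2:ℝ) ≤ (k:ℝ) + 1 := by
        have : (1:ℝ) ≤ (k:ℝ) := by exact_mod_cast h
        linarith
      have ht1 : 1 ≤ Real.logb 2 ((k:ℝ)+1) := by
        have := Real.logb_le_logb_of_le one_lt_two (x := 2) (by norm_num) hk1
        simpa using this
      have : (0:ℝ) ≤ Real.logb r (Real.logb 2 ((k:ℝ)+1)) := Real.logb_nonneg hr ht1
      exact Int.le_floor.mpr (by simpa [hJ_def] using this)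
  have hAnti : Antitone a := by
    have hJmono : Monotone J := by
      intro k l hkl
      rcases Nat.eq_zero_or_pos k with h | h
      · rw [show J k = 0 by simp [hJ_def, h]]; exact hJ0 l
      · apply Int.floor_le_floor
        have hk0 : (0:ℝ) < (k:ℝ) + 1 := by positivity
        have hl : ((k:ℝ)+1) ≤ ((l:ℝ)+1) := by
          have : (k:ℝ) ≤ l := by exact_mod_cast hkl
          linarith
        have h2k : (1:ℝ) < Real.logb 2 ((k:ℝ)+1) ∨ _ := Or.inr trivial
        have hlogpos : 0 < Real.logb 2 ((k:ℝ)+1) := by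
          apply Real.logb_pos one_lt_two
          have : (1:ℝ) ≤ (k:ℝ) := by exact_mod_cast h
          linarith
        exact Real.logb_le_logb_of_le hr hlogpos
          (Real.logb_le_logb_of_le one_lt_two hk0 hl)
    intro k l hkl
    have hBkl : B k ≤ B l := by
      apply Real.rpow_le_rpow_of_exponent_le one_le_two
      exact zpow_le_zpow_right₀ hr.le (hJmono hkl)
    exact Real.rpow_le_rpow_of_nonpos (hBpos k) hBkl (by linarith)
  -- value identities
  have val₁ : ∀ k : ℕ, a k * (k:ℝ) ^ γ₁ = ((k:ℝ) / B k) ^ γ₁ := by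
    intro k
    simp only [ha_def]
    rw [Real.div_rpow (Nat.cast_nonneg k) (hBpos k).le,
      Real.rpow_neg (hBpos k).le, div_eq_mul_inv, mul_comm]
  have hBr : ∀ k, (B k ^ r) ^ γ₂ = B k ^ γ₁ := by
    intro k
    rw [← Real.rpow_mul (hBpos k).le, hrγ]
  have val₂ : ∀ k : ℕ, a k * (k:ℝ) ^ γ₂ = ((k:ℝ) / B k ^ r) ^ γ₂ := by
    intro k
    simp only [ha_def]
    rw [Real.div_rpow (Nat.cast_nonneg k) (Real.rpow_pos_of_pos (hBpos k) r).le, hBr,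
      Real.rpow_neg (hBpos k).le, div_eq_mul_inv, mul_comm]
  -- global bounds
  have U2 : ∀ k : ℕ, a k * (k:ℝ) ^ γ₂ ≤ 1 := by
    intro k
    rcases Nat.eq_zero_or_pos k with h | h
    · simp [h, Real.zero_rpow h2.ne']
    · rw [val₂]
      apply Real.rpow_le_one (by positivity) _ h2.le
      rw [div_le_one (Real.rpow_pos_of_pos (hBpos k) r)]
      have := (key k h).2
      linarith
  have L1 : ∀ k : ℕ, 1 ≤ k → ((k:ℝ)/((k:ℝ)+1)) ^ γ₁ ≤ a k * (k:ℝ) ^ γ₁ := by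
    intro k hk
    rw [val₁]
    apply Real.rpow_le_rpow (by positivity)
    · apply div_le_div_of_nonneg_left (Nat.cast_nonneg k) (hBpos k) (key k hk).1
    · exact h1.le

  -- the special scales
  set Bm : ℕ → ℝ := fun m => (2:ℝ) ^ ((r ^ m : ℝ)) with hBm_def
  have hBm_pos : ∀ m, 0 < Bm m := fun m => Real.rpow_pos_of_pos two_pos _
  have hBm_two : ∀ m, 2 ≤ Bm m := by
    intro m
    have h1m : (1:ℝ) ≤ r ^ m := one_le_pow₀ hr.le
    calc (2:ℝ) = 2 ^ (1:ℝ) := (Real.rpow_one 2).symm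
      _ ≤ 2 ^ (r ^ m : ℝ) := Real.rpow_le_rpow_of_exponent_le one_le_two h1m
  have hBm_tendsto : Tendsto Bm atTop atTop := by
    have hpow : Tendsto (fun m : ℕ => (r:ℝ) ^ m) atTop atTop :=
      tendsto_pow_atTop_atTop_of_one_lt hr
    have h2x : Tendsto (fun x : ℝ => (2:ℝ) ^ x) atTop atTop := by
      simp_rw [Real.rpow_def_of_pos two_pos]
      exact Real.tendsto_exp_atTop.comp
        (Tendsto.const_mul_atTop (Real.log_pos one_lt_two) tendsto_id)
    exact h2x.comp hpow
  have ev_gap : ∀ᶠ m in atTop, Bm m + 2 ≤ Bm m ^ r := by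
    have hmul : Tendsto (fun m : ℕ => (r:ℝ) ^ m * (r - 1)) atTop atTop :=
      Tendsto.atTop_mul_const (by linarith) (tendsto_pow_atTop_atTop_of_one_lt hr)
    filter_upwards [hmul.eventually_ge_atTop 2] with m hm
    have hexp : Bm m ^ r = Bm m * 2 ^ ((r:ℝ) ^ m * (r - 1)) := by
      rw [hBm_def]
      rw [← Real.rpow_mul (by norm_num), ← Real.rpow_add two_pos]
      ring_nf
    have h4 : (4:ℝ) ≤ 2 ^ ((r:ℝ) ^ m * (r - 1)) := by
      calc (4:ℝ) = 2 ^ (2:ℝ) := by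
            rw [show (2:ℝ) = ((2:ℕ):ℝ) by norm_num, Real.rpow_natCast]; norm_num
        _ ≤ _ := Real.rpow_le_rpow_of_exponent_le one_le_two hm
    have h2m := hBm_two m
    nlinarith [hBm_pos m]
  -- identify the block index at the special scales
  have Jval : ∀ (k m : ℕ), Bm m ≤ (k:ℝ) + 1 → ((k:ℝ) + 1) < Bm m ^ r →
      J k = (m:ℤ) ∧ B k = Bm m := by
    intro k m hge hlt
    have hkpos : (0:ℝ) < (k:ℝ) + 1 := lt_of_lt_of_le (by linarith [hBm_two m]) hge
    set t := Real.logb 2 ((k:ℝ) + 1) with ht_def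
    have hlogBm : Real.logb 2 (Bm m) = (r:ℝ) ^ m := by
      rw [hBm_def]; exact Real.logb_rpow two_pos (by norm_num)
    have hBmr : Bm m ^ r = (2:ℝ) ^ ((r:ℝ) ^ m * r) := by
      rw [hBm_def, ← Real.rpow_mul (by norm_num)]
    have hrm1 : (r:ℝ) ^ m * r = (r:ℝ) ^ (m + 1) := (pow_succ r m).symm
    have hlo : (r:ℝ) ^ m ≤ t := by
      rw [← hlogBm]
      exact Real.logb_le_logb_of_le one_lt_two (hBm_pos m) hge
    have hhi : t < (r:ℝ) ^ (m + 1) := by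
      have := Real.logb_lt_logb one_lt_two hkpos hlt
      rwa [hBmr, Real.logb_rpow two_pos (by norm_num), hrm1] at this
    have ht0 : 0 < t := lt_of_lt_of_le (pow_pos hr0 m) hlo
    have hnpow : ∀ n : ℕ, (r:ℝ) ^ n = r ^ ((n:ℝ)) := fun n => (Real.rpow_natCast r n).symm
    have hJk : J k = (m:ℤ) := by
      rw [hJ_def]
      apply Int.floor_eq_iff.mpr
      constructor
      · push_cast
        calc (m:ℝ) = Real.logb r ((r:ℝ) ^ ((m:ℝ))) := (Real.logb_rpow hr0 hr.ne').symm
          _ ≤ Real.logb r t := by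
              apply Real.logb_le_logb_of_le hr (by rw [← hnpow]; exact pow_pos hr0 m)
              rw [← hnpow]; exact hlo
      · push_cast
        calc Real.logb r t < Real.logb r ((r:ℝ) ^ (m+1)) := by
              apply Real.logb_lt_logb hr ht0 hhi
          _ = (m:ℝ) + 1 := by
              rw [hnpow (m+1), Real.logb_rpow hr0 hr.ne']; push_cast; ring
    refine ⟨hJk, ?_⟩
    rw [hB_def, hBm_def]
    simp only [hJk, zpow_natCast]

  -- frequently a k * k^γ₁ ≤ 1 (left block ends)
  have freq_le : ∃ᶠ k in atTop, a k * (k:ℝ) ^ γ₁ ≤ 1 := by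
    rw [frequently_atTop]
    intro N
    obtain ⟨m, hm1, hm2⟩ :=
      (ev_gap.and (hBm_tendsto.eventually_ge_atTop ((N:ℝ) + 2))).exists
    set k := ⌈Bm m⌉₊ - 1 with hk_def
    have hceil2 : 2 ≤ ⌈Bm m⌉₊ := by
      have : (1:ℕ) < ⌈Bm m⌉₊ := Nat.lt_ceil.mpr (by push_cast; linarith [hBm_two m])
      omega
    have hk1 : ((k:ℝ) + 1) = (⌈Bm m⌉₊ : ℝ) := by
      have : k + 1 = ⌈Bm m⌉₊ := by omega
      exact_mod_cast congrArg (Nat.cast : ℕ → ℝ) this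
    have hle : Bm m ≤ (k:ℝ) + 1 := by rw [hk1]; exact Nat.le_ceil _
    have hceil_lt : (⌈Bm m⌉₊ : ℝ) < Bm m + 1 := Nat.ceil_lt_add_one (hBm_pos m).le
    have hlt : ((k:ℝ) + 1) < Bm m ^ r := by rw [hk1]; linarith
    obtain ⟨hJk, hBk⟩ := Jval k m hle hlt
    refine ⟨k, ?_, ?_⟩
    · have : (N:ℝ) ≤ (k:ℝ) := by linarith
      exact_mod_cast this
    · rw [val₁, hBk]
      apply Real.rpow_le_one (by positivity) _ h1.le
      rw [div_le_one (hBm_pos m)]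
      linarith
  -- frequently a k * k^γ₂ close to 1 (right block ends)
  have freq_ge : ∀ c : ℝ, c < 1 → ∃ᶠ k in atTop, c ≤ a k * (k:ℝ) ^ γ₂ := by
    intro c hc
    have hBr_tendsto : Tendsto (fun m => Bm m ^ r) atTop atTop :=
      (tendsto_rpow_atTop hr0).comp hBm_tendsto
    have ev3 : ∀ᶠ m in atTop, c < (1 - 2 / Bm m ^ r) ^ γ₂ := by
      have hdiv : Tendsto (fun m => 2 / Bm m ^ r) atTop (𝓝 0) :=
        Tendsto.div_atTop tendsto_const_nhds hBr_tendsto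
      have hone : Tendsto (fun m => 1 - 2 / Bm m ^ r) atTop (𝓝 1) := by
        have := tendsto_const_nhds (x := (1:ℝ)) (f := atTop (α := ℕ)) |>.sub hdiv
        simpa using this
      have hrpow : Tendsto (fun m => (1 - 2 / Bm m ^ r) ^ γ₂) atTop (𝓝 1) := by
        have := hone.rpow_const (Or.inr h2.le)
        simpa using this
      exact hrpow.eventually (eventually_gt_nhds hc)
    rw [frequently_atTop]
    intro N
    obtain ⟨m, hm1, hm2, hm3⟩ :=
      (ev_gap.and ((hBm_tendsto.eventually_ge_atTop ((N:ℝ) + 2)).and ev3)).exists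
    have h4 : (4:ℝ) ≤ Bm m ^ r := by linarith [hBm_two m]
    set k := ⌈Bm m ^ r⌉₊ - 2 with hk_def
    have hceil3 : 3 ≤ ⌈Bm m ^ r⌉₊ := by
      have : (2:ℕ) < ⌈Bm m ^ r⌉₊ := Nat.lt_ceil.mpr (by push_cast; linarith)
      omega
    have hk2 : ((k:ℝ) + 2) = (⌈Bm m ^ r⌉₊ : ℝ) := by
      have : k + 2 = ⌈Bm m ^ r⌉₊ := by omega
      exact_mod_cast congrArg (Nat.cast : ℕ → ℝ) this
    have hge2 : Bm m ^ r ≤ (k:ℝ) + 2 := by rw [hk2]; exact Nat.le_ceil _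
    have hceil_lt : (⌈Bm m ^ r⌉₊ : ℝ) < Bm m ^ r + 1 :=
      Nat.ceil_lt_add_one (by positivity)
    have hle : Bm m ≤ (k:ℝ) + 1 := by linarith
    have hlt : ((k:ℝ) + 1) < Bm m ^ r := by linarith
    obtain ⟨hJk, hBk⟩ := Jval k m hle hlt
    refine ⟨k, ?_, ?_⟩
    · have : (N:ℝ) ≤ (k:ℝ) := by linarith [hBm_two m]
      exact_mod_cast this
    · rw [val₂, hBk]
      have hXpos : (0:ℝ) < Bm m ^ r := by positivity
      have hbase : 1 - 2 / Bm m ^ r ≤ (k:ℝ) / Bm m ^ r := by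
        have : 1 - 2 / Bm m ^ r = (Bm m ^ r - 2) / Bm m ^ r := by
          field_simp
        rw [this]
        gcongr
        linarith
      have hnn : (0:ℝ) ≤ 1 - 2 / Bm m ^ r := by
        rw [sub_nonneg, div_le_one hXpos]; linarith
      calc c ≤ (1 - 2 / Bm m ^ r) ^ γ₂ := hm3.le
        _ ≤ ((k:ℝ) / Bm m ^ r) ^ γ₂ := Real.rpow_le_rpow hnn hbase h2.le

  -- boundedness facts
  have hbd_below₁ : IsBoundedUnder (· ≥ ·) atTop (fun k : ℕ => a k * (k:ℝ) ^ γ₁) :=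
    isBoundedUnder_of ⟨0, fun k => by show (0:ℝ) ≤ _; positivity⟩
  have hbd_below₂ : IsBoundedUnder (· ≥ ·) atTop (fun k : ℕ => a k * (k:ℝ) ^ γ₂) :=
    isBoundedUnder_of ⟨0, fun k => by show (0:ℝ) ≤ _; positivity⟩
  have hbd_above₂ : IsBoundedUnder (· ≤ ·) atTop (fun k : ℕ => a k * (k:ℝ) ^ γ₂) :=
    isBoundedUnder_of ⟨1, fun k => U2 k⟩
  have hcb₁ : IsCoboundedUnder (· ≥ ·) atTop (fun k : ℕ => a k * (k:ℝ) ^ γ₁) :=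
    IsCoboundedUnder.of_frequently_le freq_le
  -- limsup = 1
  have hlimsup : Filter.limsup (fun k : ℕ => a k * (k:ℝ) ^ γ₂) Filter.atTop = 1 := by
    apply le_antisymm
    · exact limsup_le_of_le hbd_below₂.isCoboundedUnder_le (Eventually.of_forall U2)
    · by_contra hcon
      push_neg at hcon
      obtain ⟨c, hc1, hc2⟩ := exists_between hcon
      exact absurd (le_limsup_of_frequently_le (freq_ge c hc2) hbd_above₂) (not_le.mpr hc1)
  -- liminf = 1
  have hliminf : Filter.liminf (fun k : ℕ => a k * (k:ℝ) ^ γ₁) Filter.atTop = 1 := by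
    apply le_antisymm
    · exact liminf_le_of_frequently_le freq_le hbd_below₁
    · have htend : Tendsto (fun k : ℕ => ((k:ℝ) / ((k:ℝ) + 1)) ^ γ₁) atTop (𝓝 1) := by
        have h0 : Tendsto (fun k : ℕ => (k:ℝ) / ((k:ℝ) + 1)) atTop (𝓝 1) :=
          tendsto_natCast_div_add_atTop (1:ℝ)
        have := h0.rpow_const (Or.inr h1.le)
        simpa using this
      have heq : Filter.liminf (fun k : ℕ => ((k:ℝ) / ((k:ℝ) + 1)) ^ γ₁) atTop = 1 :=
        htend.liminf_eq
      rw [← heq]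
      apply liminf_le_liminf
      · filter_upwards [eventually_ge_atTop 1] with k hk
        exact L1 k hk
      · exact isBoundedUnder_of ⟨0, fun k => by show (0:ℝ) ≤ _; positivity⟩
      · exact hcb₁
  refine ⟨a, hapos, hAnti, hlimsup, hliminf, ?_⟩
  -- no exponent γ works
  rintro γ hγ ⟨c, C, hc, hcC⟩
  have freq2 : ∃ᶠ k in atTop, a k * (k:ℝ) ^ γ₁ < 2 := by
    by_contra hcon
    rw [not_frequently] at hcon
    have : (2:ℝ) ≤ Filter.liminf (fun k : ℕ => a k * (k:ℝ) ^ γ₁) Filter.atTop := by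
      apply le_liminf_of_le hcb₁
      filter_upwards [hcon] with k hk
      exact not_lt.mp hk
    rw [hliminf] at this; norm_num at this
  have freq12 : ∃ᶠ k in atTop, (1:ℝ)/2 < a k * (k:ℝ) ^ γ₂ := by
    by_contra hcon
    rw [not_frequently] at hcon
    have : Filter.limsup (fun k : ℕ => a k * (k:ℝ) ^ γ₂) Filter.atTop ≤ 1/2 := by
      apply limsup_le_of_le hbd_below₂.isCoboundedUnder_le
      filter_upwards [hcon] with k hk
      exact not_lt.mp hk
    rw [hlimsup] at this; norm_num at this
  rcases lt_or_ge γ γ₁ with hγlt | hγge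
  · -- γ < γ₁ : lower bound c fails
    have hev : ∀ᶠ k : ℕ in atTop, 2 * (k:ℝ) ^ (γ - γ₁) < c := by
      have : Tendsto (fun k : ℕ => (k:ℝ) ^ (γ - γ₁)) atTop (𝓝 0) := by
        have hneg : γ - γ₁ = -(γ₁ - γ) := by ring
        rw [hneg]
        exact (tendsto_rpow_neg_atTop (by linarith)).comp tendsto_natCast_atTop_atTop
      have h2this : Tendsto (fun k : ℕ => 2 * (k:ℝ) ^ (γ - γ₁)) atTop (𝓝 0) := by
        have := this.const_mul (2:ℝ)
        simpa using this
      exact h2this.eventually (eventually_lt_nhds hc)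
    obtain ⟨k, hklt, hk1, hkev⟩ :=
      (freq2.and_eventually ((eventually_ge_atTop 1).and hev)).exists
    have hkpos : (0:ℝ) < (k:ℝ) := by exact_mod_cast hk1
    have hsplit : (k:ℝ) ^ γ = (k:ℝ) ^ γ₁ * (k:ℝ) ^ (γ - γ₁) := by
      rw [← Real.rpow_add hkpos]; ring_nf
    have hrpos : (0:ℝ) < (k:ℝ) ^ (γ - γ₁) := Real.rpow_pos_of_pos hkpos _
    have hle := (hcC k hk1).1
    rw [hsplit, ← mul_assoc] at hle
    nlinarith
  · -- γ ≥ γ₁ > γ₂ : upper bound C fails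
    have hev : ∀ᶠ k : ℕ in atTop, C < 1/2 * (k:ℝ) ^ (γ - γ₂) := by
      have : Tendsto (fun k : ℕ => (1:ℝ)/2 * (k:ℝ) ^ (γ - γ₂)) atTop atTop := by
        apply Tendsto.const_mul_atTop (by norm_num : (0:ℝ) < 1/2)
        exact (tendsto_rpow_atTop (by linarith)).comp tendsto_natCast_atTop_atTop
      exact this.eventually_gt_atTop C
    obtain ⟨k, hklt, hk1, hkev⟩ :=
      (freq12.and_eventually ((eventually_ge_atTop 1).and hev)).exists
    have hkpos : (0:ℝ) < (k:ℝ) := by exact_mod_cast hk1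
    have hsplit : (k:ℝ) ^ γ = (k:ℝ) ^ γ₂ * (k:ℝ) ^ (γ - γ₂) := by
      rw [← Real.rpow_add hkpos]; ring_nf
    have hrpos : (0:ℝ) < (k:ℝ) ^ (γ - γ₂) := Real.rpow_pos_of_pos hkpos _
    have hle := (hcC k hk1).2
    rw [hsplit, ← mul_assoc] at hle
    nlinarith
end

section
/- Let H be a Hilbert space, let A be a nonzero compact positive semi-definite (self-adjoint) bounded linear operator on H, let α > 0, let a ≤ b be integers, and let η_a, …, η_b be real numbers in (0, 1/‖A‖]. Then ‖A^α ∘ ∏_{j=a}^{b} (I − η_j A)‖² ≤ ((α/e)^{2α} + ‖A‖^{2α}) / (1 + (Σ_{j=a}^{b} η_j)^{2α}), where ‖·‖ is the operator norm, A^α is the real power of the positive operator A defined by the continuous functional calculus, and the product of operators is the composition (the factors commute). Moreover ‖∏_{j=a}^{b}(I − η_j A)‖ ≤ 1. -/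
open Real

private theorem aux_rpow_exp (α : ℝ) (hα : 0 < α) (t : ℝ) (ht : 0 ≤ t) :
    t ^ α * Real.exp (-t) ≤ (α / Real.exp 1) ^ α := by
  rcases eq_or_lt_of_le ht with h | h
  · rw [← h, Real.zero_rpow hα.ne', zero_mul]
    positivity
  · have hαe : (0:ℝ) < α / Real.exp 1 := by positivity
    rw [Real.rpow_def_of_pos h, Real.rpow_def_of_pos hαe, ← Real.exp_add]
    apply Real.exp_le_exp.mpr
    have hlog := Real.log_le_sub_one_of_pos (show (0:ℝ) < t / α by positivity)
    rw [Real.log_div h.ne' hα.ne'] at hlog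
    have h2 : α * (Real.log t - Real.log α) ≤ α * (t / α - 1) :=
      mul_le_mul_of_nonneg_left hlog hα.le
    have h3 : α * (t / α) = t := by field_simp
    rw [Real.log_div hα.ne' (Real.exp_ne_zero 1), Real.log_exp]
    nlinarith [h2, h3]

private theorem aux_cont (η : ℤ → ℝ) (l : List ℤ) :
    Continuous fun u : ℝ => (l.map fun j => 1 - η j * u).prod := by
  induction l with
  | nil => simpa using continuous_const
  | cons j l ih =>
    simp only [List.map_cons, List.prod_cons]
    exact ((continuous_const.sub (continuous_const.mul continuous_id)).mul ih)

private theorem aux_prod_cfc {H : Type*} [NormedAddCommGroup H] [InnerProductSpace ℂ H]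
    [CompleteSpace H] (A : H →L[ℂ] H) (hsa : IsSelfAdjoint A) (η : ℤ → ℝ) (l : List ℤ) :
    (l.map fun j => (1 : H →L[ℂ] H) - η j • A).prod
      = cfc (fun u : ℝ => (l.map fun j => 1 - η j * u).prod) A := by
  induction l with
  | nil => simp only [List.map_nil, List.prod_nil]; exact (cfc_const_one ℝ A hsa).symm
  | cons j l ih =>
    simp only [List.map_cons, List.prod_cons]
    rw [ih]
    have hfac : (1 : H →L[ℂ] H) - η j • A = cfc (fun u : ℝ => 1 - η j * u) A := by
      rw [cfc_sub _ _ A (by fun_prop) (by fun_prop), cfc_const_one ℝ A hsa]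
      congr 1
      exact (cfc_const_mul_id (η j) A hsa).symm
    rw [hfac, ← cfc_mul _ _ A (by fun_prop) (aux_cont η l).continuousOn]

/-- For a nonzero compact positive (self-adjoint) operator `A` on a Hilbert
space, `α > 0`, integers `a ≤ b`, and step-sizes `η_j ∈ (0, 1/‖A‖]`:
`‖A^α ∘ ∏_{j=a}^b (I - η_j A)‖² ≤ ((α/e)^{2α} + ‖A‖^{2α})/(1 + (Σ η_j)^{2α})`,
where `A^α = cfc (· ^ α) A` is given by the continuous functional calculus;
moreover `‖∏_{j=a}^b (I - η_j A)‖ ≤ 1`. -/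
theorem stmt8 {H : Type*} [NormedAddCommGroup H] [InnerProductSpace ℂ H]
    [CompleteSpace H] (A : H →L[ℂ] H) (hA : A ≠ 0)
    (hcpt : IsCompactOperator (A : H →L[ℂ] H)) (hpos : A.IsPositive)
    (α : ℝ) (hα : 0 < α) (a b : ℤ) (hab : a ≤ b) (η : ℤ → ℝ)
    (hη : ∀ j ∈ Finset.Icc a b, η j ∈ Set.Ioc (0 : ℝ) (1 / ‖A‖)) :
    ‖cfc (fun u : ℝ => u ^ α) A *
          (((Finset.Icc a b).sort (· ≤ ·)).map
              (fun j => (1 : H →L[ℂ] H) - η j • A)).prod‖ ^ 2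
        ≤ ((α / Real.exp 1) ^ (2 * α) + ‖A‖ ^ (2 * α)) /
            (1 + (∑ j ∈ Finset.Icc a b, η j) ^ (2 * α)) ∧
      ‖(((Finset.Icc a b).sort (· ≤ ·)).map
            (fun j => (1 : H →L[ℂ] H) - η j • A)).prod‖ ≤ 1 := by
  have hsa : IsSelfAdjoint A := hpos.isSelfAdjoint
  haveI : Nontrivial H := by
    by_contra h
    rw [not_nontrivial_iff_subsingleton] at h
    exact hA (Subsingleton.elim _ _)
  set s : Finset ℤ := Finset.Icc a b with hs
  set M : ℝ := ‖A‖ with hMdef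
  have hM : 0 < M := norm_pos_iff.mpr hA
  set S : ℝ := ∑ j ∈ s, η j with hSdef
  have hS : 0 < S :=
    Finset.sum_pos (fun j hj => (hη j hj).1) (Finset.nonempty_Icc.mpr hab)
  -- the scalar function corresponding to the operator product
  set g : ℝ → ℝ := fun u => ((s.sort (· ≤ ·)).map fun j => 1 - η j * u).prod with hgdef
  have hg_eq : ∀ u : ℝ, g u = ∏ j ∈ s, (1 - η j * u) := by
    intro u
    rw [hgdef]
    rw [Finset.prod_eq_multiset_prod, ← Finset.sort_eq s (· ≤ ·), Multiset.map_coe,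
      Multiset.prod_coe]
  have hgcont : Continuous g := aux_cont η _
  have hProd : ((s.sort (· ≤ ·)).map fun j => (1 : H →L[ℂ] H) - η j • A).prod = cfc g A :=
    aux_prod_cfc A hsa η _
  -- spectrum facts
  have hspec : ∀ x ∈ spectrum ℝ A, 0 ≤ x ∧ x ≤ M := by
    intro x hx
    have hx0 : 0 ≤ x :=
      spectrum_nonneg_of_nonneg ((ContinuousLinearMap.nonneg_iff_isPositive A).mpr hpos) hx
    refine ⟨hx0, ?_⟩
    have := spectrum.norm_le_norm_of_mem hx
    rwa [Real.norm_eq_abs, abs_of_nonneg hx0] at this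
  -- pointwise bounds on g over the spectrum
  have hgx : ∀ x ∈ spectrum ℝ A, 0 ≤ g x ∧ g x ≤ 1 ∧ g x ≤ Real.exp (-(S * x)) := by
    intro x hx
    obtain ⟨hx0, hxM⟩ := hspec x hx
    have hfac0 : ∀ j ∈ s, 0 ≤ 1 - η j * x := by
      intro j hj
      obtain ⟨hj1, hj2⟩ := hη j hj
      have : η j * x ≤ (1 / M) * M := mul_le_mul hj2 hxM hx0 (by positivity)
      rw [one_div_mul_cancel hM.ne'] at this
      linarith
    have hfac1 : ∀ j ∈ s, 1 - η j * x ≤ 1 := by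
      intro j hj
      have := mul_nonneg (hη j hj).1.le hx0
      linarith
    have hP0 : 0 ≤ g x := by
      rw [hg_eq]; exact Finset.prod_nonneg hfac0
    have hP1 : g x ≤ 1 := by
      rw [hg_eq]; exact Finset.prod_le_one hfac0 hfac1
    refine ⟨hP0, hP1, ?_⟩
    rw [hg_eq]
    calc ∏ j ∈ s, (1 - η j * x) ≤ ∏ j ∈ s, Real.exp (-(η j * x)) := by
          refine Finset.prod_le_prod hfac0 fun j hj => ?_
          have := Real.add_one_le_exp (-(η j * x))
          linarith
      _ = Real.exp (∑ j ∈ s, -(η j * x)) := (Real.exp_sum s _).symm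
      _ = Real.exp (-(S * x)) := by
          rw [Finset.sum_neg_distrib, ← Finset.sum_mul]
  -- the norm bound constant
  set C1 : ℝ := (α / Real.exp 1) ^ α / S ^ α with hC1
  set C2 : ℝ := M ^ α with hC2
  have hC1_0 : 0 ≤ C1 := by positivity
  have hC2_0 : 0 ≤ C2 := by positivity
  have hc0 : 0 ≤ min C1 C2 := le_min hC1_0 hC2_0
  -- combine everything with cfc
  have hcα : ContinuousOn (fun u : ℝ => u ^ α) (spectrum ℝ A) := fun x _ =>
    (Real.continuousAt_rpow_const x α (Or.inr hα.le)).continuousWithinAt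
  have Hop : cfc (fun u : ℝ => u ^ α) A * cfc g A = cfc (fun u : ℝ => u ^ α * g u) A :=
    (cfc_mul (fun u : ℝ => u ^ α) g A hcα hgcont.continuousOn).symm
  have hnorm : ‖cfc (fun u : ℝ => u ^ α * g u) A‖ ≤ min C1 C2 := by
    refine norm_cfc_le hc0 fun x hx => ?_
    obtain ⟨hx0, hxM⟩ := hspec x hx
    obtain ⟨hP0, hP1, hPexp⟩ := hgx x hx
    have hxα : 0 ≤ x ^ α := Real.rpow_nonneg hx0 α
    rw [Real.norm_eq_abs, abs_of_nonneg (mul_nonneg hxα hP0)]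
    refine le_min ?_ ?_
    · have h1 : x ^ α * g x ≤ x ^ α * Real.exp (-(S * x)) :=
        mul_le_mul_of_nonneg_left hPexp hxα
      have hSα : (0:ℝ) < S ^ α := Real.rpow_pos_of_pos hS α
      have h2 : x ^ α * Real.exp (-(S * x)) = (S * x) ^ α * Real.exp (-(S * x)) / S ^ α := by
        rw [Real.mul_rpow hS.le hx0, eq_div_iff hSα.ne']
        ring
      have h3 := aux_rpow_exp α hα (S * x) (by positivity)
      calc x ^ α * g x ≤ x ^ α * Real.exp (-(S * x)) := h1
        _ = (S * x) ^ α * Real.exp (-(S * x)) / S ^ α := h2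
        _ ≤ (α / Real.exp 1) ^ α / S ^ α := by gcongr
        _ = C1 := rfl
    · calc x ^ α * g x ≤ x ^ α * 1 := mul_le_mul_of_nonneg_left hP1 hxα
        _ = x ^ α := mul_one _
        _ ≤ M ^ α := Real.rpow_le_rpow hx0 hxM hα.le
  constructor
  · rw [hProd, Hop]
    have hsq : ‖cfc (fun u : ℝ => u ^ α * g u) A‖ ^ 2 ≤ (min C1 C2) ^ 2 :=
      pow_le_pow_left₀ (norm_nonneg _) hnorm 2
    refine hsq.trans ?_
    -- arithmetic with rpow squares
    have sq_rpow : ∀ x : ℝ, 0 ≤ x → (x ^ α) ^ 2 = x ^ (2 * α) := by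
      intro x hx
      rw [← Real.rpow_natCast (x ^ α) 2, ← Real.rpow_mul hx]
      norm_num
      rw [mul_comm]
    have hC1sq : C1 ^ 2 = (α / Real.exp 1) ^ (2 * α) / S ^ (2 * α) := by
      rw [hC1, div_pow, sq_rpow _ (by positivity), sq_rpow _ hS.le]
    have hC2sq : C2 ^ 2 = M ^ (2 * α) := sq_rpow _ hM.le
    set X : ℝ := (α / Real.exp 1) ^ (2 * α) with hX
    set Y : ℝ := M ^ (2 * α) with hY
    set P : ℝ := S ^ (2 * α) with hP
    have hPpos : 0 < P := Real.rpow_pos_of_pos hS _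
    have e1 : (min C1 C2) ^ 2 ≤ X / P := by
      calc (min C1 C2) ^ 2 ≤ C1 ^ 2 := pow_le_pow_left₀ hc0 (min_le_left _ _) 2
        _ = X / P := hC1sq
    have e2 : (min C1 C2) ^ 2 ≤ Y := by
      calc (min C1 C2) ^ 2 ≤ C2 ^ 2 := pow_le_pow_left₀ hc0 (min_le_right _ _) 2
        _ = Y := hC2sq
    have e1' : (min C1 C2) ^ 2 * P ≤ X := (le_div_iff₀ hPpos).mp e1
    rw [le_div_iff₀ (by positivity)]
    nlinarith [e1', e2, hPpos, sq_nonneg (min C1 C2)]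
  · rw [hProd]
    refine norm_cfc_le zero_le_one fun x hx => ?_
    obtain ⟨hP0, hP1, -⟩ := hgx x hx
    rw [Real.norm_eq_abs, abs_of_nonneg hP0]
    exact hP1
end

section
/- Let M > 0, α > 0, let a ≤ b be integers, let η_a, …, η_b be real numbers in (0, 1/M], and let u ∈ [0, M]. Then u^{2α} · ∏_{j=a}^{b} (1 − η_j u)² ≤ ((α/e)^{2α} + M^{2α}) / (1 + (Σ_{j=a}^{b} η_j)^{2α}). -/
open Real

lemma key_rpow_exp (α : ℝ) (hα : 0 < α) (t : ℝ) (ht : 0 ≤ t) :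
    t ^ (2 * α) * Real.exp (-(2 * t)) ≤ (α / Real.exp 1) ^ (2 * α) := by
  rcases eq_or_lt_of_le ht with h | h
  · rw [← h, Real.zero_rpow (by positivity), zero_mul]
    positivity
  · have h1 : t ≤ α * Real.exp (t / α - 1) := by
      have h0 := Real.add_one_le_exp (t / α - 1)
      have h2 : t / α ≤ Real.exp (t / α - 1) := by linarith
      calc t = α * (t / α) := by field_simp
        _ ≤ α * Real.exp (t / α - 1) := by nlinarith
    have h3 : t ^ (2 * α) ≤ (α * Real.exp (t / α - 1)) ^ (2 * α) :=
      Real.rpow_le_rpow ht h1 (by positivity)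
    have h4 : (α * Real.exp (t / α - 1)) ^ (2 * α)
        = α ^ (2 * α) * Real.exp ((t / α - 1) * (2 * α)) := by
      rw [Real.mul_rpow hα.le (Real.exp_pos _).le, Real.exp_mul]
    have h5 : (t / α - 1) * (2 * α) = 2 * t - 2 * α := by field_simp
    have h6 : (α / Real.exp 1) ^ (2 * α) = α ^ (2 * α) * Real.exp (-(2 * α)) := by
      rw [Real.div_rpow hα.le (Real.exp_pos _).le, Real.exp_one_rpow,
        Real.exp_neg, div_eq_mul_inv]
    rw [h6]
    calc t ^ (2 * α) * Real.exp (-(2 * t))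
        ≤ α ^ (2 * α) * Real.exp (2 * t - 2 * α) * Real.exp (-(2 * t)) := by
          apply mul_le_mul_of_nonneg_right _ (Real.exp_pos _).le
          rw [← h5, ← h4]; exact h3
      _ = α ^ (2 * α) * Real.exp (-(2 * α)) := by
          rw [mul_assoc, ← Real.exp_add]; ring_nf

/-- Scalar polynomial inequality: for `M > 0`, `α > 0`, integers `a ≤ b`,
`η_j ∈ (0, 1/M]` and `u ∈ [0, M]`,
`u^{2α} · ∏_{j=a}^b (1 - η_j u)² ≤ ((α/e)^{2α} + M^{2α})/(1 + (Σ η_j)^{2α})`. -/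
theorem stmt9 (M α : ℝ) (hM : 0 < M) (hα : 0 < α) (a b : ℤ) (hab : a ≤ b)
    (η : ℤ → ℝ) (hη : ∀ j ∈ Finset.Icc a b, η j ∈ Set.Ioc (0 : ℝ) (1 / M))
    (u : ℝ) (hu : u ∈ Set.Icc (0 : ℝ) M) :
    u ^ (2 * α) * (∏ j ∈ Finset.Icc a b, (1 - η j * u)) ^ 2
      ≤ ((α / Real.exp 1) ^ (2 * α) + M ^ (2 * α)) /
          (1 + (∑ j ∈ Finset.Icc a b, η j) ^ (2 * α)) := by
  obtain ⟨hu0, huM⟩ := hu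
  set S := ∑ j ∈ Finset.Icc a b, η j with hS
  have hSpos : 0 < S :=
    Finset.sum_pos (fun j hj => (hη j hj).1) (Finset.nonempty_Icc.mpr hab)
  have hfac : ∀ j ∈ Finset.Icc a b, 0 ≤ 1 - η j * u ∧ 1 - η j * u ≤ Real.exp (-(η j * u)) := by
    intro j hj
    obtain ⟨h1, h2⟩ := hη j hj
    constructor
    · have : η j * u ≤ (1 / M) * M := mul_le_mul h2 huM hu0 (by positivity)
      rw [one_div_mul_cancel hM.ne'] at this
      linarith
    · have := Real.add_one_le_exp (-(η j * u))
      linarith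
  have hprod_nonneg : 0 ≤ ∏ j ∈ Finset.Icc a b, (1 - η j * u) :=
    Finset.prod_nonneg fun j hj => (hfac j hj).1
  have hprod_le : ∏ j ∈ Finset.Icc a b, (1 - η j * u) ≤ Real.exp (-(S * u)) := by
    have : Real.exp (-(S * u)) = ∏ j ∈ Finset.Icc a b, Real.exp (-(η j * u)) := by
      rw [← Real.exp_sum]
      congr 1
      rw [hS, Finset.sum_mul, ← Finset.sum_neg_distrib]
    rw [this]
    exact Finset.prod_le_prod (fun j hj => (hfac j hj).1) (fun j hj => (hfac j hj).2)
  have hsq : (∏ j ∈ Finset.Icc a b, (1 - η j * u)) ^ 2 ≤ Real.exp (-(2 * (S * u))) := by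
    calc (∏ j ∈ Finset.Icc a b, (1 - η j * u)) ^ 2
        ≤ Real.exp (-(S * u)) ^ 2 := pow_le_pow_left₀ hprod_nonneg hprod_le 2
      _ = Real.exp (-(2 * (S * u))) := by
          rw [← Real.exp_nat_mul]; ring_nf
  set X := u ^ (2 * α) * Real.exp (-(2 * (S * u))) with hX
  have hLHS : u ^ (2 * α) * (∏ j ∈ Finset.Icc a b, (1 - η j * u)) ^ 2 ≤ X :=
    mul_le_mul_of_nonneg_left hsq (Real.rpow_nonneg hu0 _)
  have hXB : X ≤ M ^ (2 * α) := by
    calc X ≤ M ^ (2 * α) * 1 := by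
          apply mul_le_mul (Real.rpow_le_rpow hu0 huM (by positivity))
            (Real.exp_le_one_iff.mpr (by nlinarith)) (Real.exp_pos _).le (by positivity)
      _ = M ^ (2 * α) := mul_one _
  have hXA : S ^ (2 * α) * X ≤ (α / Real.exp 1) ^ (2 * α) := by
    have := key_rpow_exp α hα (S * u) (by positivity)
    rw [Real.mul_rpow hSpos.le hu0] at this
    calc S ^ (2 * α) * X = S ^ (2 * α) * u ^ (2 * α) * Real.exp (-(2 * (S * u))) := by
          rw [hX]; ring
      _ ≤ (α / Real.exp 1) ^ (2 * α) := this
  have hXnn : 0 ≤ X := by positivity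
  have hspos : 0 < S ^ (2 * α) := Real.rpow_pos_of_pos hSpos _
  calc u ^ (2 * α) * (∏ j ∈ Finset.Icc a b, (1 - η j * u)) ^ 2
      ≤ X := hLHS
    _ ≤ ((α / Real.exp 1) ^ (2 * α) + M ^ (2 * α)) / (1 + S ^ (2 * α)) := by
        rw [le_div_iff₀ (by positivity)]
        nlinarith
end

section
/- Let η₀ > 0, 0 < θ < 1, ν > 0, and set η_k = η₀·k^{-θ} for k ≥ 1. Then there exists a constant C > 0, independent of t, such that for every integer t ≥ 1: Σ_{k=1}^{t} η_k² / (1 + (Σ_{j=k+1}^{t} η_j)^{ν}) ≤ C·(t+1)^{ω}·log(t+1) if (ν,θ) ∈ Ω, and Σ_{k=1}^{t} η_k² / (1 + (Σ_{j=k+1}^{t} η_j)^{ν}) ≤ C·(t+1)^{ω} if (ν,θ) ∉ Ω. Here the inner sum Σ_{j=k+1}^{t} η_j is zero when k = t. -/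
open Real

/-- The rate exponent `ω(ν,θ)` of Lemma 3: `ω = 1-2θ-ν+νθ` when `ν ≤ 1` and
`θ ≤ 1/2`; `ω = -θ` when `ν ≥ 1` and `θ ≤ ν/(ν+1)`; `ω = -ν(1-θ)` when
`θ ≥ 1/2` and `θ ≥ ν/(ν+1)` (the formulas agree on overlaps). -/
noncomputable def rateExp (ν θ : ℝ) : ℝ :=
  if ν ≤ 1 ∧ θ ≤ 1 / 2 then 1 - 2 * θ - ν + ν * θ
  else if 1 ≤ ν ∧ θ ≤ ν / (ν + 1) then -θ
  else -ν * (1 - θ)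

/-- The exceptional set `Ω = {(ν,θ) : 0 < ν ≤ 1, θ = 1/2} ∪ {(ν,θ) : ν = 1, 0 < θ ≤ 1/2}`
on which a logarithmic factor appears. -/
def logSet : Set (ℝ × ℝ) :=
  {p | (0 < p.1 ∧ p.1 ≤ 1 ∧ p.2 = 1 / 2) ∨ (p.1 = 1 ∧ 0 < p.2 ∧ p.2 ≤ 1 / 2)}

section helpers
open Finset

lemma rpow_mvt {a b : ℝ} (ha : 0 < a) (hab : a < b) (p : ℝ) :
    ∃ c ∈ Set.Ioo a b, b ^ p - a ^ p = p * c ^ (p - 1) * (b - a) := by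
  have hcont : ContinuousOn (fun x : ℝ => x ^ p) (Set.Icc a b) := by
    intro x hx
    have hx0 : x ≠ 0 := ne_of_gt (lt_of_lt_of_le ha hx.1)
    exact (Real.continuousAt_rpow_const x p (Or.inl hx0)).continuousWithinAt
  have hderiv : ∀ x ∈ Set.Ioo a b, HasDerivAt (fun x : ℝ => x ^ p) (p * x ^ (p - 1)) x := by
    intro x hx
    exact Real.hasDerivAt_rpow_const (Or.inl (ne_of_gt (lt_trans ha hx.1)))
  obtain ⟨c, hc, hc'⟩ := exists_hasDerivAt_eq_slope (fun x : ℝ => x ^ p)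
    (fun x => p * x ^ (p - 1)) hab hcont hderiv
  refine ⟨c, hc, ?_⟩
  rw [hc', div_mul_cancel₀]
  exact sub_ne_zero.mpr (ne_of_gt hab)

-- base^(p-1) antitone comparison: for 0 < c ≤ b, p ≤ 1: b^(p-1) ≤ c^(p-1)
lemma rpow_step_le {a b : ℝ} (ha : 0 < a) (hab : a < b) {p : ℝ} (hp0 : 0 ≤ p) (hp : p ≤ 1) :
    p * b ^ (p - 1) * (b - a) ≤ b ^ p - a ^ p := by
  obtain ⟨c, hc, hc'⟩ := rpow_mvt ha hab p
  rw [hc']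
  have hcb : b ^ (p - 1) ≤ c ^ (p - 1) :=
    Real.rpow_le_rpow_of_nonpos (lt_trans ha hc.1) hc.2.le (by linarith)
  have : 0 < b - a := by linarith
  have := mul_le_mul_of_nonneg_left hcb hp0
  exact mul_le_mul_of_nonneg_right this (by linarith)

lemma rpow_step_ge {a b : ℝ} (ha : 0 < a) (hab : a < b) {p : ℝ} (hp : p ≤ 0) :
    b ^ p - a ^ p ≤ p * b ^ (p - 1) * (b - a) := by
  obtain ⟨c, hc, hc'⟩ := rpow_mvt ha hab p
  rw [hc']
  have hcb : b ^ (p - 1) ≤ c ^ (p - 1) :=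
    Real.rpow_le_rpow_of_nonpos (lt_trans ha hc.1) hc.2.le (by linarith)
  have : 0 < b - a := by linarith
  have := mul_le_mul_of_nonpos_left hcb hp
  exact mul_le_mul_of_nonneg_right this (by linarith)

lemma sum_Icc_le_telescope (f g : ℕ → ℝ) :
    ∀ n : ℕ, (∀ k, 1 ≤ k → k ≤ n → f k ≤ g (k - 1) - g k) →
      ∑ k ∈ Finset.Icc 1 n, f k ≤ g 0 - g n := by
  intro n
  induction n with
  | zero => intro _; simp
  | succ n ih =>
    intro h
    rw [← Finset.Ico_add_one_right_eq_Icc, Finset.sum_Ico_succ_top (by omega), Finset.Ico_add_one_right_eq_Icc]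
    have h1 := ih (fun k hk hkn => h k hk (by omega))
    have h2 := h (n + 1) (by omega) le_rfl
    simp only [Nat.add_sub_cancel] at h2
    linarith

lemma sum_rpow_lt_one {q : ℝ} (hq0 : 0 ≤ q) (hq : q < 1) (n : ℕ) :
    ∑ k ∈ Finset.Icc 1 n, ((k : ℝ)) ^ (-q) ≤ (n : ℝ) ^ (1 - q) / (1 - q) := by
  have h1q : 0 < 1 - q := by linarith
  have := sum_Icc_le_telescope (fun k => ((k : ℝ)) ^ (-q))
    (fun k => -(((k : ℝ)) ^ (1 - q)) / (1 - q)) n ?_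
  · rw [Nat.cast_zero, Real.zero_rpow (ne_of_gt h1q)] at this
    calc ∑ k ∈ Finset.Icc 1 n, ((k : ℝ)) ^ (-q) ≤ -0 / (1-q) - -((n:ℝ) ^ (1-q)) / (1-q) := this
    _ ≤ (n : ℝ) ^ (1 - q) / (1 - q) := by ring_nf; rfl
  · intro k hk hkn
    have hc : ((k - 1 : ℕ) : ℝ) = (k : ℝ) - 1 := by
      have : (1:ℕ) ≤ k := hk
      push_cast [Nat.cast_sub this]; ring
    simp only [hc]
    rcases eq_or_lt_of_le hk with h1 | h2
    · -- k = 1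
      rw [← h1]
      norm_num
      rw [Real.zero_rpow (ne_of_gt h1q)]
      have e0 : -0 / (1 - q) - -1 / (1 - q) = 1 / (1-q) := by ring
      rw [e0, le_div_iff₀ h1q]
      nlinarith
    · -- k ≥ 2
      have hk2 : (2:ℕ) ≤ k := h2
      have ha : (0:ℝ) < (k:ℝ) - 1 := by
        have : (2:ℝ) ≤ (k:ℝ) := by exact_mod_cast hk2
        linarith
      have hab : (k:ℝ) - 1 < (k:ℝ) := by linarith
      have key := rpow_step_le ha hab (p := 1 - q) (by linarith) (by linarith)
      have he : (1 - q) - 1 = -q := by ring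
      rw [he] at key
      have : (1-q) * (k:ℝ) ^ (-q) ≤ (k:ℝ) ^ (1-q) - ((k:ℝ)-1) ^ (1-q) := by
        have h1 : (k:ℝ) - ((k:ℝ)-1) = 1 := by ring
        calc (1-q) * (k:ℝ) ^ (-q) = (1-q) * (k:ℝ) ^ (-q) * ((k:ℝ) - ((k:ℝ)-1)) := by
              rw [h1, mul_one]
        _ ≤ _ := key
      have hgoal : -(((k:ℝ)-1) ^ (1-q)) / (1-q) - -((k:ℝ) ^ (1-q)) / (1-q)
          = ((k:ℝ) ^ (1-q) - ((k:ℝ)-1) ^ (1-q)) / (1-q) := by ring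
      rw [hgoal, le_div_iff₀ h1q]
      linarith [this]


lemma sum_inv_le_log (n : ℕ) :
    ∑ k ∈ Finset.Icc 1 n, ((k : ℝ))⁻¹ ≤ 1 + Real.log n := by
  rcases Nat.eq_zero_or_pos n with h | h
  · subst h; simp
  have hlog0 : (0:ℝ) ≤ Real.log n := Real.log_natCast_nonneg n
  have := sum_Icc_le_telescope (fun k => ((k : ℝ))⁻¹)
    (fun k => if k = 0 then 1 else -Real.log k) n ?_
  · rw [if_pos rfl, if_neg (by omega)] at this
    linarith [this]
  · intro k hk hkn
    beta_reduce
    rcases eq_or_lt_of_le hk with h1 | h2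
    · rw [← h1]; norm_num
    · have hk2 : (2:ℕ) ≤ k := h2
      have hkr : (2:ℝ) ≤ (k:ℝ) := by exact_mod_cast hk2
      have hA : k - 1 ≠ 0 := by omega
      have hB : k ≠ 0 := by omega
      rw [if_neg hA, if_neg hB]
      have hc : ((k - 1 : ℕ) : ℝ) = (k : ℝ) - 1 := by
        push_cast [Nat.cast_sub hk]; ring
      rw [hc]
      have hpos : (0:ℝ) < ((k:ℝ) - 1) / k := by
        apply div_pos <;> linarith
      have hlog := Real.log_le_sub_one_of_pos hpos
      rw [Real.log_div (by linarith) (by linarith)] at hlog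
      have hkinv : ((k:ℝ) - 1) / k - 1 = -(k:ℝ)⁻¹ := by
        field_simp
        ring
      rw [hkinv] at hlog
      linarith [hlog]

lemma sum_rpow_gt_one {q : ℝ} (hq : 1 < q) (n : ℕ) :
    ∑ k ∈ Finset.Icc 1 n, ((k : ℝ)) ^ (-q) ≤ 1 + 1 / (q - 1) := by
  have hq1 : 0 < q - 1 := by linarith
  rcases Nat.eq_zero_or_pos n with h | h
  · subst h; simp; positivity
  have := sum_Icc_le_telescope (fun k => ((k : ℝ)) ^ (-q))
    (fun k => if k = 0 then 1 + 1/(q-1) else ((k:ℝ)) ^ (1 - q) / (q - 1)) n ?_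
  · rw [if_pos rfl, if_neg (by omega)] at this
    have hnn : (0:ℝ) ≤ ((n:ℝ)) ^ (1-q) / (q-1) := by positivity
    linarith [this]
  · intro k hk hkn
    beta_reduce
    rcases eq_or_lt_of_le hk with h1 | h2
    · rw [← h1]
      have hA : (1:ℕ) - 1 = 0 := rfl
      rw [hA, if_pos rfl, if_neg (by omega)]
      push_cast
      rw [Real.one_rpow, Real.one_rpow]
      norm_num
    · have hk2 : (2:ℕ) ≤ k := h2
      have hkr : (2:ℝ) ≤ (k:ℝ) := by exact_mod_cast hk2
      have hA : k - 1 ≠ 0 := by omega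
      have hB : k ≠ 0 := by omega
      rw [if_neg hA, if_neg hB]
      have hc : ((k - 1 : ℕ) : ℝ) = (k : ℝ) - 1 := by
        push_cast [Nat.cast_sub hk]; ring
      rw [hc]
      have ha : (0:ℝ) < (k:ℝ) - 1 := by linarith
      have hab : (k:ℝ) - 1 < (k:ℝ) := by linarith
      have key := rpow_step_ge ha hab (p := 1 - q) (by linarith)
      have he : (1 - q) - 1 = -q := by ring
      rw [he] at key
      have key2 : (q-1) * (k:ℝ) ^ (-q) ≤ ((k:ℝ)-1) ^ (1-q) - (k:ℝ) ^ (1-q) := by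
        nlinarith [key]
      have hgoal : (((k:ℝ)-1)) ^ (1-q) / (q-1) - ((k:ℝ)) ^ (1-q) / (q-1)
          = (((k:ℝ)-1) ^ (1-q) - ((k:ℝ)) ^ (1-q)) / (q-1) := by ring
      rw [hgoal, le_div_iff₀ hq1]
      linarith [key2]

lemma sum_shift_rpow {ν β : ℝ} (hν : 1 < ν) (hβ : 0 < β) (n : ℕ) :
    ∑ m ∈ Finset.Icc 1 n, (1 + β * m) ^ (-ν) ≤ 1 / (β * (ν - 1)) := by
  have hν1 : 0 < ν - 1 := by linarith
  have := sum_Icc_le_telescope (fun m => (1 + β * m) ^ (-ν))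
    (fun m => (1 + β * m) ^ (1 - ν) / (β * (ν - 1))) n ?_
  · rw [Nat.cast_zero, mul_zero, add_zero, Real.one_rpow] at this
    have hnn : (0:ℝ) ≤ (1 + β * n) ^ (1-ν) / (β * (ν-1)) := by positivity
    linarith [this]
  · intro k hk hkn
    beta_reduce
    have hc : ((k - 1 : ℕ) : ℝ) = (k : ℝ) - 1 := by
      push_cast [Nat.cast_sub hk]; ring
    rw [hc]
    have hk1 : (1:ℝ) ≤ (k:ℝ) := by exact_mod_cast hk
    have ha : (0:ℝ) < 1 + β * ((k:ℝ) - 1) := by nlinarith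
    have hab : 1 + β * ((k:ℝ) - 1) < 1 + β * k := by nlinarith
    have key := rpow_step_ge ha hab (p := 1 - ν) (by linarith)
    have he : (1 - ν) - 1 = -ν := by ring
    rw [he] at key
    have hdiff : (1 + β * (k:ℝ)) - (1 + β * ((k:ℝ)-1)) = β := by ring
    rw [hdiff] at key
    have key2 : β * (ν-1) * (1 + β*(k:ℝ)) ^ (-ν)
        ≤ (1 + β*((k:ℝ)-1)) ^ (1-ν) - (1 + β*(k:ℝ)) ^ (1-ν) := by nlinarith [key]
    have hgoal : (1 + β*((k:ℝ)-1)) ^ (1-ν) / (β*(ν-1)) - (1 + β*(k:ℝ)) ^ (1-ν) / (β*(ν-1))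
        = ((1 + β*((k:ℝ)-1)) ^ (1-ν) - (1 + β*(k:ℝ)) ^ (1-ν)) / (β*(ν-1)) := by ring
    rw [hgoal, le_div_iff₀ (by positivity)]
    linarith [key2]

lemma one_add_log_le {x : ℝ} (hx : 1 ≤ x) : 1 + Real.log x ≤ 3 * Real.log (x + 1) := by
  have h2 : Real.log 2 ≤ Real.log (x+1) := Real.log_le_log (by norm_num) (by linarith)
  have hx1 : Real.log x ≤ Real.log (x+1) := Real.log_le_log (by linarith) (by linarith)
  have hl2 : (0.6931471803 : ℝ) < Real.log 2 := Real.log_two_gt_d9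
  linarith

lemma one_add_log_le_eps {x ε : ℝ} (hx : 1 ≤ x) (hε : 0 < ε) :
    1 + Real.log x ≤ (1 + 1/ε) * x ^ ε := by
  have hx0 : (0:ℝ) < x := by linarith
  have h1 : (1:ℝ) ≤ x ^ ε := by
    rw [show (1:ℝ) = 1 ^ ε by rw [Real.one_rpow]]
    exact Real.rpow_le_rpow (by norm_num) hx (le_of_lt hε)
  have h2 : Real.log (x ^ ε) ≤ x ^ ε - 1 := Real.log_le_sub_one_of_pos (by positivity)
  rw [Real.log_rpow hx0] at h2
  have h3 : Real.log x ≤ (x ^ ε - 1)/ε := by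
    rw [le_div_iff₀ hε]; nlinarith [h2]
  have h5 : (1 + 1/ε) * x ^ ε = x ^ ε + (1/ε) * x ^ ε := by ring
  have h6 : x ^ ε / ε ≤ (1/ε) * x ^ ε := by
    rw [div_eq_mul_inv, mul_comm]; rw [one_div]
  rw [h5]
  have h7 : (x ^ ε - 1)/ε = x ^ ε/ε - 1/ε := by ring
  rw [h7] at h3
  have h8 : (0:ℝ) ≤ 1/ε := by positivity
  linarith [h3, h6, h1]

lemma rpow_bridge {x e w : ℝ} (hx : 1 ≤ x) (h : e ≤ w) :
    x ^ e ≤ (1 + 2 ^ (-w)) * (x + 1) ^ w := by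
  have hx0 : (0:ℝ) < x := by linarith
  have h1 : x ^ e ≤ x ^ w := Real.rpow_le_rpow_of_exponent_le hx h
  rcases le_or_gt 0 w with hw | hw
  · have h2 : x ^ w ≤ (x+1) ^ w := Real.rpow_le_rpow (le_of_lt hx0) (by linarith) hw
    have h3 : (0:ℝ) ≤ (x+1) ^ w := by positivity
    nlinarith [Real.rpow_nonneg (by norm_num : (0:ℝ) ≤ 2) (-w), h3]
  · have h2 : (x+1) ^ w ≥ (2*x) ^ w :=
      Real.rpow_le_rpow_of_nonpos (by linarith) (by linarith) (le_of_lt hw)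
    rw [Real.mul_rpow (by norm_num) (le_of_lt hx0)] at h2
    have h4 : (2:ℝ) ^ (-w) * ((2:ℝ) ^ w * x ^ w) = x ^ w := by
      rw [← mul_assoc, ← Real.rpow_add (by norm_num : (0:ℝ) < 2)]
      norm_num
    have h5 : (0:ℝ) < (2:ℝ) ^ (-w) := by positivity
    have h6 : (0:ℝ) ≤ (x+1) ^ w := by positivity
    nlinarith [h2, h5, h6, h1, h4]

lemma denom_lb {η₀ θ : ℝ} (hη₀ : 0 < η₀) (hθ : 0 < θ) {t k : ℕ} (hk2 : k ≤ t) :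
    η₀ * (t:ℝ) ^ (-θ) * ((t - k : ℕ):ℝ) ≤ ∑ j ∈ Finset.Icc (k+1) t, η₀ * (j:ℝ) ^ (-θ) := by
  have hcard : (Finset.Icc (k+1) t).card = t - k := by
    rw [Nat.card_Icc]; omega
  have hstep : ∀ j ∈ Finset.Icc (k+1) t, η₀ * (t:ℝ) ^ (-θ) ≤ η₀ * (j:ℝ) ^ (-θ) := by
    intro j hj
    rw [Finset.mem_Icc] at hj
    have hj0 : (0:ℝ) < (j:ℝ) := by
      have : 1 ≤ j := by omega
      exact_mod_cast Nat.lt_of_lt_of_le Nat.zero_lt_one this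
    have hjt : (j:ℝ) ≤ (t:ℝ) := by exact_mod_cast hj.2
    have := Real.rpow_le_rpow_of_nonpos hj0 hjt (neg_nonpos.mpr (le_of_lt hθ))
    nlinarith [this]
  have := Finset.card_nsmul_le_sum (Finset.Icc (k+1) t)
    (fun j => η₀ * (j:ℝ) ^ (-θ)) (η₀ * (t:ℝ) ^ (-θ)) hstep
  rw [hcard, nsmul_eq_mul] at this
  calc η₀ * (t:ℝ) ^ (-θ) * ((t - k : ℕ):ℝ) = ((t-k:ℕ):ℝ) * (η₀ * (t:ℝ)^(-θ)) := by ring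
  _ ≤ _ := this

lemma reflect_bound {β ν : ℝ} (hβ : 0 < β) (hν : 0 < ν) {t : ℕ} (ht : 1 ≤ t) :
    ∑ k ∈ Finset.Icc 1 t, (1 + (β * (((t - k : ℕ)):ℝ)) ^ ν)⁻¹
      ≤ 1 + ∑ m ∈ Finset.Icc 1 t, (1 + (β * (m:ℝ)) ^ ν)⁻¹ := by
  set f : ℕ → ℝ := fun m => (1 + (β * (m:ℝ)) ^ ν)⁻¹ with hf
  obtain ⟨s, rfl⟩ : ∃ s, t = s + 1 := ⟨t - 1, by omega⟩
  have h1 : ∑ k ∈ Finset.Icc 1 (s+1), f ((s+1) - k) = ∑ i ∈ Finset.range (s+1), f (s - i) := by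
    rw [← Finset.Ico_add_one_right_eq_Icc, Finset.sum_Ico_eq_sum_range]
    apply Finset.sum_congr (by norm_num)
    intro i _
    congr 1
    omega
  have h2 : ∑ i ∈ Finset.range (s+1), f (s - i) = ∑ i ∈ Finset.range (s+1), f i := by
    have := Finset.sum_range_reflect f (s+1)
    simpa using this
  have hf0 : f 0 = 1 := by
    simp only [hf, Nat.cast_zero, mul_zero, Real.zero_rpow (ne_of_gt hν), add_zero, inv_one]
  have h3 : ∑ i ∈ Finset.range (s+1), f i = (∑ i ∈ Finset.range s, f (i+1)) + f 0 :=
    Finset.sum_range_succ' f s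
  have h4 : ∑ i ∈ Finset.range s, f (i+1) ≤ ∑ i ∈ Finset.range (s+1), f (i+1) := by
    apply Finset.sum_le_sum_of_subset_of_nonneg (Finset.range_subset_range.mpr (by omega))
    intro i _ _
    positivity
  have h5 : ∑ i ∈ Finset.range (s+1), f (i+1) = ∑ m ∈ Finset.Icc 1 (s+1), f m := by
    rw [← Finset.Ico_add_one_right_eq_Icc, Finset.sum_Ico_eq_sum_range]
    apply Finset.sum_congr (by norm_num)
    intro i _
    congr 1
    omega
  rw [h1, h2, h3, hf0]
  linarith [h4, h5.le, h5.ge]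

lemma key_bound (η₀ θ ν : ℝ) (hη₀ : 0 < η₀) (hθ : 0 < θ) (hθ1 : θ < 1) (hν : 0 < ν)
    (t : ℕ) (ht : 1 ≤ t) :
    ∑ k ∈ Finset.Icc 1 t, (η₀ * (k : ℝ) ^ (-θ)) ^ 2 /
        (1 + (∑ j ∈ Finset.Icc (k + 1) t, η₀ * (j : ℝ) ^ (-θ)) ^ ν)
      ≤ (η₀^2 * (2/η₀) ^ ν) * ((t:ℝ) ^ (-(ν*(1-θ))) * ∑ k ∈ Finset.Icc 1 t, (k:ℝ) ^ (-(2*θ)))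
        + (η₀^2 * 2 ^ (2*θ)) * ((t:ℝ) ^ (-(2*θ)) *
            (1 + ∑ m ∈ Finset.Icc 1 t, (1 + (η₀ * (t:ℝ) ^ (-θ) * (m:ℝ)) ^ ν)⁻¹)) := by
  set x : ℝ := (t:ℝ) with hxdef
  have hx : (1:ℝ) ≤ x := by rw [hxdef]; exact_mod_cast ht
  have hx0 : (0:ℝ) < x := by linarith
  set β : ℝ := η₀ * x ^ (-θ) with hβdef
  have hβ : 0 < β := by positivity
  set D : ℝ := (η₀/2) ^ ν * x ^ (ν*(1-θ)) with hDdef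
  have hD : 0 < D := by positivity
  -- pointwise bound
  have hpt : ∀ k ∈ Finset.Icc 1 t,
      (η₀ * (k : ℝ) ^ (-θ)) ^ 2 / (1 + (∑ j ∈ Finset.Icc (k + 1) t, η₀ * (j : ℝ) ^ (-θ)) ^ ν)
        ≤ η₀^2 * ((k:ℝ) ^ (-(2*θ)) * D⁻¹)
          + η₀^2 * 2 ^ (2*θ) * (x ^ (-(2*θ)) * (1 + (β * (((t - k : ℕ)):ℝ)) ^ ν)⁻¹) := by
    intro k hk
    rw [Finset.mem_Icc] at hk
    have hk0 : (0:ℝ) < (k:ℝ) := by exact_mod_cast Nat.lt_of_lt_of_le Nat.zero_lt_one hk.1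
    have hkx : (k:ℝ) ≤ x := by rw [hxdef]; exact_mod_cast hk.2
    have hnum : (η₀ * (k:ℝ) ^ (-θ)) ^ 2 = η₀^2 * (k:ℝ) ^ (-(2*θ)) := by
      rw [mul_pow]
      congr 1
      rw [← Real.rpow_natCast ((k:ℝ) ^ (-θ)) 2, ← Real.rpow_mul (le_of_lt hk0)]
      norm_num
      congr 1
      ring
    have hTlb := denom_lb hη₀ hθ (t := t) (k := k) hk.2
    have hTlb' : (β * (((t - k : ℕ)):ℝ)) ^ ν
        ≤ (∑ j ∈ Finset.Icc (k + 1) t, η₀ * (j : ℝ) ^ (-θ)) ^ ν := by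
      apply Real.rpow_le_rpow (by positivity) _ (le_of_lt hν)
      calc β * (((t - k : ℕ)):ℝ) = η₀ * x ^ (-θ) * (((t - k : ℕ)):ℝ) := by rw [hβdef]
      _ ≤ _ := hTlb
    have hd1 : (0:ℝ) < 1 + (β * (((t - k : ℕ)):ℝ)) ^ ν := by positivity
    have hstep1 : (η₀ * (k : ℝ) ^ (-θ)) ^ 2 /
          (1 + (∑ j ∈ Finset.Icc (k + 1) t, η₀ * (j : ℝ) ^ (-θ)) ^ ν)
        ≤ η₀^2 * (k:ℝ) ^ (-(2*θ)) / (1 + (β * (((t - k : ℕ)):ℝ)) ^ ν) := by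
      rw [hnum]
      gcongr
    have hmc : ((t - k : ℕ):ℝ) = x - (k:ℝ) := by
      rw [hxdef]; push_cast [Nat.cast_sub hk.2]; ring
    rcases le_or_gt (2*k) t with hsplit | hsplit
    · -- head: denominator at least D
      have hk2x : (k:ℝ) ≤ x/2 := by
        have : ((2*k:ℕ):ℝ) ≤ x := by rw [hxdef]; exact_mod_cast hsplit
        push_cast at this
        linarith
      have hβm : (η₀/2) * x ^ (1-θ) ≤ β * (((t - k : ℕ)):ℝ) := by
        rw [hmc, hβdef]
        have hxe : x ^ (1-θ) = x ^ (-θ) * x := by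
          rw [show (1-θ) = -θ + 1 by ring, Real.rpow_add hx0, Real.rpow_one]
        rw [hxe]
        have hxm : x/2 ≤ x - (k:ℝ) := by linarith
        have hp : (0:ℝ) < x ^ (-θ) := by positivity
        nlinarith [hp, hxm]
      have hDle : D ≤ (β * (((t - k : ℕ)):ℝ)) ^ ν := by
        rw [hDdef]
        calc (η₀/2) ^ ν * x ^ (ν*(1-θ)) = ((η₀/2) * x ^ (1-θ)) ^ ν := by
              rw [Real.mul_rpow (by positivity) (by positivity), ← Real.rpow_mul (le_of_lt hx0)]
              ring_nf
        _ ≤ _ := Real.rpow_le_rpow (by positivity) hβm (le_of_lt hν)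
      have hinv : (1 + (β * (((t - k : ℕ)):ℝ)) ^ ν)⁻¹ ≤ D⁻¹ := by
        apply inv_anti₀ hD
        linarith [hDle]
      have h1 : η₀^2 * (k:ℝ) ^ (-(2*θ)) / (1 + (β * (((t - k : ℕ)):ℝ)) ^ ν)
          ≤ η₀^2 * ((k:ℝ) ^ (-(2*θ)) * D⁻¹) := by
        rw [div_eq_mul_inv, mul_assoc]
        gcongr
      have h2 : (0:ℝ) ≤ η₀^2 * 2 ^ (2*θ) * (x ^ (-(2*θ)) * (1 + (β * (((t - k : ℕ)):ℝ)) ^ ν)⁻¹) := by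
        positivity
      linarith [hstep1, h1, h2]
    · -- tail: k > t/2
      have hkx2 : x/2 < (k:ℝ) := by
        have : x < ((2*k:ℕ):ℝ) := by rw [hxdef]; exact_mod_cast hsplit
        push_cast at this
        linarith
      have hkb : (k:ℝ) ^ (-(2*θ)) ≤ 2 ^ (2*θ) * x ^ (-(2*θ)) := by
        have h1 : (k:ℝ) ^ (-(2*θ)) ≤ (x/2) ^ (-(2*θ)) :=
          Real.rpow_le_rpow_of_nonpos (by linarith) (le_of_lt hkx2) (by nlinarith)
        have h2 : (x/2 : ℝ) ^ (-(2*θ)) = 2 ^ (2*θ) * x ^ (-(2*θ)) := by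
          rw [div_eq_mul_inv, Real.mul_rpow (le_of_lt hx0) (by norm_num),
            Real.inv_rpow (by norm_num), ← Real.rpow_neg (by norm_num)]
          ring_nf
        rw [← h2]
        exact h1
      have h1 : η₀^2 * (k:ℝ) ^ (-(2*θ)) / (1 + (β * (((t - k : ℕ)):ℝ)) ^ ν)
          ≤ η₀^2 * 2 ^ (2*θ) * (x ^ (-(2*θ)) * (1 + (β * (((t - k : ℕ)):ℝ)) ^ ν)⁻¹) := by
        rw [div_eq_mul_inv]
        calc η₀^2 * (k:ℝ) ^ (-(2*θ)) * (1 + (β * (((t - k : ℕ)):ℝ)) ^ ν)⁻¹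
            ≤ η₀^2 * (2 ^ (2*θ) * x ^ (-(2*θ))) * (1 + (β * (((t - k : ℕ)):ℝ)) ^ ν)⁻¹ := by
              gcongr
        _ = η₀^2 * 2 ^ (2*θ) * (x ^ (-(2*θ)) * (1 + (β * (((t - k : ℕ)):ℝ)) ^ ν)⁻¹) := by ring
      have h2 : (0:ℝ) ≤ η₀^2 * ((k:ℝ) ^ (-(2*θ)) * D⁻¹) := by positivity
      linarith [hstep1, h1, h2]
  -- sum up
  have hsum := Finset.sum_le_sum hpt
  rw [Finset.sum_add_distrib] at hsum
  have hA : ∑ k ∈ Finset.Icc 1 t, η₀^2 * ((k:ℝ) ^ (-(2*θ)) * D⁻¹)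
      = η₀^2 * D⁻¹ * ∑ k ∈ Finset.Icc 1 t, (k:ℝ) ^ (-(2*θ)) := by
    rw [Finset.mul_sum]
    apply Finset.sum_congr rfl
    intro k _
    ring
  have hDinv : D⁻¹ = (2/η₀) ^ ν * x ^ (-(ν*(1-θ))) := by
    rw [hDdef, mul_inv, ← Real.inv_rpow (by positivity), inv_div, ← Real.rpow_neg (le_of_lt hx0)]
  have hB : ∑ k ∈ Finset.Icc 1 t, η₀^2 * 2 ^ (2*θ) * (x ^ (-(2*θ)) * (1 + (β * (((t - k : ℕ)):ℝ)) ^ ν)⁻¹)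
      = η₀^2 * 2 ^ (2*θ) * x ^ (-(2*θ)) * ∑ k ∈ Finset.Icc 1 t, (1 + (β * (((t - k : ℕ)):ℝ)) ^ ν)⁻¹ := by
    rw [Finset.mul_sum]
    apply Finset.sum_congr rfl
    intro k _
    ring
  rw [hA, hB] at hsum
  have hrefl := reflect_bound hβ hν ht
  calc ∑ k ∈ Finset.Icc 1 t, (η₀ * (k : ℝ) ^ (-θ)) ^ 2 /
        (1 + (∑ j ∈ Finset.Icc (k + 1) t, η₀ * (j : ℝ) ^ (-θ)) ^ ν)
      ≤ η₀^2 * D⁻¹ * ∑ k ∈ Finset.Icc 1 t, (k:ℝ) ^ (-(2*θ))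
        + η₀^2 * 2 ^ (2*θ) * x ^ (-(2*θ)) * ∑ k ∈ Finset.Icc 1 t, (1 + (β * (((t - k : ℕ)):ℝ)) ^ ν)⁻¹ := hsum
  _ ≤ η₀^2 * D⁻¹ * ∑ k ∈ Finset.Icc 1 t, (k:ℝ) ^ (-(2*θ))
        + η₀^2 * 2 ^ (2*θ) * x ^ (-(2*θ)) * (1 + ∑ m ∈ Finset.Icc 1 t, (1 + (β * (m:ℝ)) ^ ν)⁻¹) := by
      gcongr
  _ = (η₀^2 * (2/η₀) ^ ν) * (x ^ (-(ν*(1-θ))) * ∑ k ∈ Finset.Icc 1 t, (k:ℝ) ^ (-(2*θ)))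
        + (η₀^2 * 2 ^ (2*θ)) * (x ^ (-(2*θ)) * (1 + ∑ m ∈ Finset.Icc 1 t, (1 + (β * (m:ℝ)) ^ ν)⁻¹)) := by
      rw [hDinv]
      ring

lemma Qlem1 {ν β : ℝ} (hν0 : 0 < ν) (hν : ν < 1) (hβ : 0 < β) (n : ℕ) :
    ∑ m ∈ Finset.Icc 1 n, (1 + (β * (m:ℝ)) ^ ν)⁻¹ ≤ β ^ (-ν) * ((n:ℝ) ^ (1-ν) / (1-ν)) := by
  have h1 : ∑ m ∈ Finset.Icc 1 n, (1 + (β * (m:ℝ)) ^ ν)⁻¹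
      ≤ ∑ m ∈ Finset.Icc 1 n, β ^ (-ν) * (m:ℝ) ^ (-ν) := by
    apply Finset.sum_le_sum
    intro m hm
    rw [Finset.mem_Icc] at hm
    have hm0 : (0:ℝ) < (m:ℝ) := by exact_mod_cast Nat.lt_of_lt_of_le Nat.zero_lt_one hm.1
    have hbm : (0:ℝ) < (β * (m:ℝ)) ^ ν := by positivity
    have h2 : (1 + (β * (m:ℝ)) ^ ν)⁻¹ ≤ ((β * (m:ℝ)) ^ ν)⁻¹ := by
      apply inv_anti₀ hbm
      linarith
    calc (1 + (β * (m:ℝ)) ^ ν)⁻¹ ≤ ((β * (m:ℝ)) ^ ν)⁻¹ := h2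
    _ = β ^ (-ν) * (m:ℝ) ^ (-ν) := by
        rw [← Real.rpow_neg (by positivity), Real.mul_rpow (le_of_lt hβ) (le_of_lt hm0)]
  rw [← Finset.mul_sum] at h1
  calc ∑ m ∈ Finset.Icc 1 n, (1 + (β * (m:ℝ)) ^ ν)⁻¹
      ≤ β ^ (-ν) * ∑ m ∈ Finset.Icc 1 n, (m:ℝ) ^ (-ν) := h1
  _ ≤ β ^ (-ν) * ((n:ℝ) ^ (1-ν) / (1-ν)) :=
      mul_le_mul_of_nonneg_left (sum_rpow_lt_one (le_of_lt hν0) hν n) (by positivity)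

lemma Qlem2 {β : ℝ} (hβ : 0 < β) (n : ℕ) :
    ∑ m ∈ Finset.Icc 1 n, (1 + β * (m:ℝ))⁻¹ ≤ β⁻¹ * (1 + Real.log n) := by
  have h1 : ∑ m ∈ Finset.Icc 1 n, (1 + β * (m:ℝ))⁻¹
      ≤ ∑ m ∈ Finset.Icc 1 n, β⁻¹ * ((m:ℝ))⁻¹ := by
    apply Finset.sum_le_sum
    intro m hm
    rw [Finset.mem_Icc] at hm
    have hm0 : (0:ℝ) < (m:ℝ) := by exact_mod_cast Nat.lt_of_lt_of_le Nat.zero_lt_one hm.1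
    have h2 : (1 + β * (m:ℝ))⁻¹ ≤ (β * (m:ℝ))⁻¹ := by
      apply inv_anti₀ (by positivity)
      linarith
    rw [mul_inv] at h2
    exact h2
  rw [← Finset.mul_sum] at h1
  calc ∑ m ∈ Finset.Icc 1 n, (1 + β * (m:ℝ))⁻¹ ≤ β⁻¹ * ∑ m ∈ Finset.Icc 1 n, ((m:ℝ))⁻¹ := h1
  _ ≤ β⁻¹ * (1 + Real.log n) :=
      mul_le_mul_of_nonneg_left (sum_inv_le_log n) (by positivity)

lemma Qlem3 {ν β : ℝ} (hν : 1 < ν) (hβ : 0 < β) (n : ℕ) :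
    ∑ m ∈ Finset.Icc 1 n, (1 + (β * (m:ℝ)) ^ ν)⁻¹ ≤ 2 ^ ν * (1 / (β * (ν - 1))) := by
  have hν0 : (0:ℝ) < ν := by linarith
  have h1 : ∑ m ∈ Finset.Icc 1 n, (1 + (β * (m:ℝ)) ^ ν)⁻¹
      ≤ ∑ m ∈ Finset.Icc 1 n, 2 ^ ν * (1 + β * (m:ℝ)) ^ (-ν) := by
    apply Finset.sum_le_sum
    intro m hm
    rw [Finset.mem_Icc] at hm
    have hm0 : (0:ℝ) < (m:ℝ) := by exact_mod_cast Nat.lt_of_lt_of_le Nat.zero_lt_one hm.1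
    have hbm0 : (0:ℝ) < β * (m:ℝ) := by positivity
    have hkey : (1 + β * (m:ℝ)) ^ ν ≤ 2 ^ ν * (1 + (β * (m:ℝ)) ^ ν) := by
      rcases le_total (β * (m:ℝ)) 1 with hc | hc
      · have h3 : (1 + β * (m:ℝ)) ^ ν ≤ (2:ℝ) ^ ν :=
          Real.rpow_le_rpow (by positivity) (by linarith) (le_of_lt hν0)
        have h4 : (0:ℝ) ≤ (β * (m:ℝ)) ^ ν := by positivity
        have h5 : (0:ℝ) < (2:ℝ) ^ ν := by positivity
        nlinarith
      · have h3 : (1 + β * (m:ℝ)) ^ ν ≤ (2 * (β * (m:ℝ))) ^ ν :=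
          Real.rpow_le_rpow (by positivity) (by linarith) (le_of_lt hν0)
        rw [Real.mul_rpow (by norm_num) (le_of_lt hbm0)] at h3
        have h5 : (0:ℝ) < (2:ℝ) ^ ν := by positivity
        nlinarith
    have hd0 : (0:ℝ) < 1 + (β * (m:ℝ)) ^ ν := by positivity
    have hs0 : (0:ℝ) < (1 + β * (m:ℝ)) ^ ν := by positivity
    rw [Real.rpow_neg (by positivity : (0:ℝ) ≤ 1 + β * (m:ℝ)), ← div_eq_mul_inv,
      inv_eq_one_div, div_le_div_iff₀ hd0 hs0]
    nlinarith [hkey]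
  have h2 : ∑ m ∈ Finset.Icc 1 n, 2 ^ ν * (1 + β * (m:ℝ)) ^ (-ν)
      = 2 ^ ν * ∑ m ∈ Finset.Icc 1 n, (1 + β * (m:ℝ)) ^ (-ν) := by
    rw [Finset.mul_sum]
  calc ∑ m ∈ Finset.Icc 1 n, (1 + (β * (m:ℝ)) ^ ν)⁻¹
      ≤ ∑ m ∈ Finset.Icc 1 n, 2 ^ ν * (1 + β * (m:ℝ)) ^ (-ν) := h1
  _ = 2 ^ ν * ∑ m ∈ Finset.Icc 1 n, (1 + β * (m:ℝ)) ^ (-ν) := h2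
  _ ≤ 2 ^ ν * (1 / (β * (ν - 1))) :=
      mul_le_mul_of_nonneg_left (sum_shift_rpow hν hβ n) (by positivity)

lemma tb1 {x e w K : ℝ} (hx : 1 ≤ x) (hK : 0 ≤ K) (h : e ≤ w) :
    K * x ^ e ≤ (K * (1 + 2 ^ (-w))) * (x + 1) ^ w := by
  have := rpow_bridge hx h
  calc K * x ^ e ≤ K * ((1 + 2 ^ (-w)) * (x + 1) ^ w) := by
        apply mul_le_mul_of_nonneg_left this hK
  _ = (K * (1 + 2 ^ (-w))) * (x + 1) ^ w := by ring

lemma tb2 {x e w K : ℝ} (hx : 1 ≤ x) (hK : 0 ≤ K) (h : e ≤ w) :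
    K * (x ^ e * (1 + Real.log x)) ≤ (3 * K * (1 + 2 ^ (-w))) * ((x + 1) ^ w * Real.log (x + 1)) := by
  have h1 := one_add_log_le hx
  have h2 := rpow_bridge hx h
  have hx0 : (0:ℝ) ≤ x ^ e := by positivity
  have hl0 : (0:ℝ) ≤ Real.log (x+1) := Real.log_nonneg (by linarith)
  have h3 : x ^ e * (1 + Real.log x) ≤ x ^ e * (3 * Real.log (x+1)) :=
    mul_le_mul_of_nonneg_left h1 hx0
  have h4 : x ^ e * (3 * Real.log (x+1)) ≤ ((1 + 2 ^ (-w)) * (x + 1) ^ w) * (3 * Real.log (x+1)) := by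
    apply mul_le_mul_of_nonneg_right h2
    positivity
  calc K * (x ^ e * (1 + Real.log x)) ≤ K * (((1 + 2 ^ (-w)) * (x + 1) ^ w) * (3 * Real.log (x+1))) := by
        apply mul_le_mul_of_nonneg_left (le_trans h3 h4) hK
  _ = (3 * K * (1 + 2 ^ (-w))) * ((x + 1) ^ w * Real.log (x + 1)) := by ring

lemma tb3 {x e w K ε : ℝ} (hx : 1 ≤ x) (hK : 0 ≤ K) (hε : 0 < ε) (h : e + ε ≤ w) :
    K * (x ^ e * (1 + Real.log x)) ≤ (K * (1 + 1/ε) * (1 + 2 ^ (-w))) * (x + 1) ^ w := by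
  have hx0 : (0:ℝ) < x := by linarith
  have h1 := one_add_log_le_eps hx hε
  have h2 : x ^ e * (1 + Real.log x) ≤ (1 + 1/ε) * x ^ (e + ε) := by
    rw [Real.rpow_add hx0]
    calc x ^ e * (1 + Real.log x) ≤ x ^ e * ((1 + 1/ε) * x ^ ε) :=
          mul_le_mul_of_nonneg_left h1 (by positivity)
    _ = (1 + 1/ε) * (x ^ e * x ^ ε) := by ring
  have h3 := rpow_bridge hx h
  calc K * (x ^ e * (1 + Real.log x)) ≤ K * ((1 + 1/ε) * x ^ (e + ε)) :=
        mul_le_mul_of_nonneg_left h2 hK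
  _ ≤ K * ((1 + 1/ε) * ((1 + 2 ^ (-w)) * (x + 1) ^ w)) := by
        apply mul_le_mul_of_nonneg_left _ hK
        apply mul_le_mul_of_nonneg_left h3 (by positivity)
  _ = (K * (1 + 1/ε) * (1 + 2 ^ (-w))) * (x + 1) ^ w := by ring

lemma tb4 {x w c : ℝ} (hx : 1 ≤ x) (hc : 0 ≤ c) :
    c * (x + 1) ^ w ≤ (2 * c) * ((x + 1) ^ w * Real.log (x + 1)) := by
  have h2 : Real.log 2 ≤ Real.log (x+1) := Real.log_le_log (by norm_num) (by linarith)
  have hl2 : (0.6931471803 : ℝ) < Real.log 2 := Real.log_two_gt_d9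
  have hp : (0:ℝ) ≤ (x+1) ^ w := by positivity
  nlinarith [hp, hc, mul_nonneg hc hp]

lemma finish3 {S A B C a b c T : ℝ} (h : S ≤ A + B + C) (ha : A ≤ a * T) (hb : B ≤ b * T)
    (hc : C ≤ c * T) (hT : 0 ≤ T) : S ≤ (a + b + c + 1) * T := by nlinarith

lemma finish3' {S A B C a b c T : ℝ} (h : S ≤ A + B + C) (ha : A ≤ a * T) (hb : B ≤ b * T)
    (hc : C ≤ c * T) (hT : 0 ≤ T) : S ≤ (|a + b + c| + 1) * T := by
  have h1 : (0:ℝ) ≤ (|a+b+c| - (a+b+c)) * T :=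
    mul_nonneg (by linarith [le_abs_self (a+b+c)]) hT
  nlinarith [h1, hT]

lemma combA {x c K e f P : ℝ} (hx : 0 < x) (hc : 0 ≤ c) (hK : 0 ≤ K)
    (hP : P ≤ K * x ^ f) :
    c * (x ^ e * P) ≤ (c * K) * x ^ (e + f) := by
  have h1 : x ^ e * P ≤ x ^ e * (K * x ^ f) :=
    mul_le_mul_of_nonneg_left hP (by positivity)
  calc c * (x ^ e * P) ≤ c * (x ^ e * (K * x ^ f)) := mul_le_mul_of_nonneg_left h1 hc
  _ = (c * K) * (x ^ e * x ^ f) := by ring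
  _ = (c * K) * x ^ (e + f) := by rw [← Real.rpow_add hx]

lemma combAlog {x c K e f P : ℝ} (hx : 1 ≤ x) (hc : 0 ≤ c) (hK : 0 ≤ K)
    (hP : P ≤ K * (x ^ f * (1 + Real.log x))) :
    c * (x ^ e * P) ≤ (c * K) * (x ^ (e + f) * (1 + Real.log x)) := by
  have hx0 : (0:ℝ) < x := by linarith
  have h1 : x ^ e * P ≤ x ^ e * (K * (x ^ f * (1 + Real.log x))) :=
    mul_le_mul_of_nonneg_left hP (by positivity)
  calc c * (x ^ e * P) ≤ c * (x ^ e * (K * (x ^ f * (1 + Real.log x)))) :=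
        mul_le_mul_of_nonneg_left h1 hc
  _ = (c * K) * ((x ^ e * x ^ f) * (1 + Real.log x)) := by ring
  _ = (c * K) * (x ^ (e + f) * (1 + Real.log x)) := by rw [← Real.rpow_add hx0]

lemma beta_rpow {η₀ x θ ν : ℝ} (hη₀ : 0 < η₀) (hx : 0 < x) :
    (η₀ * x ^ (-θ)) ^ (-ν) = η₀ ^ (-ν) * x ^ (θ * ν) := by
  rw [Real.mul_rpow (le_of_lt hη₀) (by positivity), ← Real.rpow_mul (le_of_lt hx)]
  ring_nf

lemma beta_inv {η₀ x θ : ℝ} (hη₀ : 0 < η₀) (hx : 0 < x) :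
    (η₀ * x ^ (-θ))⁻¹ = η₀⁻¹ * x ^ θ := by
  rw [mul_inv, Real.rpow_neg (le_of_lt hx), inv_inv]

lemma Pcase1 {θ : ℝ} (hθ0 : 0 < θ) (hθ : θ < 1/2) (t : ℕ) :
    ∑ k ∈ Finset.Icc 1 t, (k:ℝ) ^ (-(2*θ)) ≤ (1/(1-2*θ)) * (t:ℝ) ^ (1-2*θ) := by
  calc ∑ k ∈ Finset.Icc 1 t, (k:ℝ) ^ (-(2*θ)) ≤ (t:ℝ) ^ (1-2*θ) / (1-2*θ) :=
        sum_rpow_lt_one (by linarith) (by linarith) t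
  _ = (1/(1-2*θ)) * (t:ℝ) ^ (1-2*θ) := by ring

lemma Pcase2 (t : ℕ) :
    ∑ k ∈ Finset.Icc 1 t, (k:ℝ) ^ (-(2*(1/2:ℝ))) ≤ 1 * ((t:ℝ) ^ (0:ℝ) * (1 + Real.log t)) := by
  have h1 : ∑ k ∈ Finset.Icc 1 t, (k:ℝ) ^ (-(2*(1/2:ℝ))) = ∑ k ∈ Finset.Icc 1 t, ((k:ℝ))⁻¹ := by
    apply Finset.sum_congr rfl
    intro k _
    norm_num [Real.rpow_neg_one]
  rw [h1, Real.rpow_zero]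
  have := sum_inv_le_log t
  linarith

lemma Pcase3 {θ : ℝ} (hθ : 1/2 < θ) (t : ℕ) :
    ∑ k ∈ Finset.Icc 1 t, (k:ℝ) ^ (-(2*θ)) ≤ (1 + 1/(2*θ-1)) * (t:ℝ) ^ (0:ℝ) := by
  rw [Real.rpow_zero, mul_one]
  calc ∑ k ∈ Finset.Icc 1 t, (k:ℝ) ^ (-(2*θ)) ≤ 1 + 1/(2*θ - 1) :=
        sum_rpow_gt_one (by linarith) t
  _ = 1 + 1/(2*θ-1) := by ring

lemma Qcase1 {η₀ θ ν : ℝ} (hη₀ : 0 < η₀) (hν0 : 0 < ν) (hν : ν < 1) (t : ℕ) (ht : 1 ≤ t) :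
    ∑ m ∈ Finset.Icc 1 t, (1 + (η₀ * (t:ℝ) ^ (-θ) * (m:ℝ)) ^ ν)⁻¹
      ≤ (η₀ ^ (-ν) / (1-ν)) * (t:ℝ) ^ (θ*ν + (1-ν)) := by
  have hx0 : (0:ℝ) < (t:ℝ) := by exact_mod_cast Nat.lt_of_lt_of_le Nat.zero_lt_one ht
  have hβ : (0:ℝ) < η₀ * (t:ℝ) ^ (-θ) := by positivity
  have h1 := Qlem1 hν0 hν hβ t
  rw [beta_rpow hη₀ hx0] at h1
  calc ∑ m ∈ Finset.Icc 1 t, (1 + (η₀ * (t:ℝ) ^ (-θ) * (m:ℝ)) ^ ν)⁻¹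
      ≤ η₀ ^ (-ν) * (t:ℝ) ^ (θ*ν) * ((t:ℝ) ^ (1-ν) / (1-ν)) := h1
  _ = (η₀ ^ (-ν) / (1-ν)) * ((t:ℝ) ^ (θ*ν) * (t:ℝ) ^ (1-ν)) := by ring
  _ = (η₀ ^ (-ν) / (1-ν)) * (t:ℝ) ^ (θ*ν + (1-ν)) := by rw [← Real.rpow_add hx0]

lemma Qcase2 {η₀ θ : ℝ} (hη₀ : 0 < η₀) (t : ℕ) (ht : 1 ≤ t) :
    ∑ m ∈ Finset.Icc 1 t, (1 + (η₀ * (t:ℝ) ^ (-θ) * (m:ℝ)) ^ (1:ℝ))⁻¹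
      ≤ η₀⁻¹ * ((t:ℝ) ^ θ * (1 + Real.log t)) := by
  have hx0 : (0:ℝ) < (t:ℝ) := by exact_mod_cast Nat.lt_of_lt_of_le Nat.zero_lt_one ht
  have hβ : (0:ℝ) < η₀ * (t:ℝ) ^ (-θ) := by positivity
  have h1 : ∑ m ∈ Finset.Icc 1 t, (1 + (η₀ * (t:ℝ) ^ (-θ) * (m:ℝ)) ^ (1:ℝ))⁻¹
      = ∑ m ∈ Finset.Icc 1 t, (1 + η₀ * (t:ℝ) ^ (-θ) * (m:ℝ))⁻¹ := by
    apply Finset.sum_congr rfl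
    intro m _
    rw [Real.rpow_one]
  rw [h1]
  have h2 := Qlem2 hβ t
  rw [beta_inv hη₀ hx0] at h2
  calc ∑ m ∈ Finset.Icc 1 t, (1 + η₀ * (t:ℝ) ^ (-θ) * (m:ℝ))⁻¹
      ≤ η₀⁻¹ * (t:ℝ) ^ θ * (1 + Real.log t) := h2
  _ = η₀⁻¹ * ((t:ℝ) ^ θ * (1 + Real.log t)) := by ring

lemma Qcase3 {η₀ θ ν : ℝ} (hη₀ : 0 < η₀) (hν : 1 < ν) (t : ℕ) (ht : 1 ≤ t) :
    ∑ m ∈ Finset.Icc 1 t, (1 + (η₀ * (t:ℝ) ^ (-θ) * (m:ℝ)) ^ ν)⁻¹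
      ≤ (2 ^ ν * η₀⁻¹ / (ν - 1)) * (t:ℝ) ^ θ := by
  have hx0 : (0:ℝ) < (t:ℝ) := by exact_mod_cast Nat.lt_of_lt_of_le Nat.zero_lt_one ht
  have hβ : (0:ℝ) < η₀ * (t:ℝ) ^ (-θ) := by positivity
  have h1 := Qlem3 hν hβ t
  have h2 : (1:ℝ) / (η₀ * (t:ℝ) ^ (-θ) * (ν - 1)) = η₀⁻¹ * (t:ℝ) ^ θ / (ν - 1) := by
    rw [one_div, mul_inv, beta_inv hη₀ hx0]
    ring
  rw [h2] at h1
  calc ∑ m ∈ Finset.Icc 1 t, (1 + (η₀ * (t:ℝ) ^ (-θ) * (m:ℝ)) ^ ν)⁻¹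
      ≤ 2 ^ ν * (η₀⁻¹ * (t:ℝ) ^ θ / (ν - 1)) := h1
  _ = (2 ^ ν * η₀⁻¹ / (ν - 1)) * (t:ℝ) ^ θ := by ring

lemma key_bound' (η₀ θ ν : ℝ) (hη₀ : 0 < η₀) (hθ : 0 < θ) (hθ1 : θ < 1) (hν : 0 < ν)
    (t : ℕ) (ht : 1 ≤ t) :
    ∑ k ∈ Finset.Icc 1 t, (η₀ * (k : ℝ) ^ (-θ)) ^ 2 /
        (1 + (∑ j ∈ Finset.Icc (k + 1) t, η₀ * (j : ℝ) ^ (-θ)) ^ ν)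
      ≤ (η₀^2 * (2/η₀) ^ ν) * ((t:ℝ) ^ (-(ν*(1-θ))) * ∑ k ∈ Finset.Icc 1 t, (k:ℝ) ^ (-(2*θ)))
        + (η₀^2 * 2 ^ (2*θ)) * (t:ℝ) ^ (-(2*θ))
        + (η₀^2 * 2 ^ (2*θ)) * ((t:ℝ) ^ (-(2*θ)) *
            ∑ m ∈ Finset.Icc 1 t, (1 + (η₀ * (t:ℝ) ^ (-θ) * (m:ℝ)) ^ ν)⁻¹) := by
  have h := key_bound η₀ θ ν hη₀ hθ hθ1 hν t ht
  calc ∑ k ∈ Finset.Icc 1 t, (η₀ * (k : ℝ) ^ (-θ)) ^ 2 /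
        (1 + (∑ j ∈ Finset.Icc (k + 1) t, η₀ * (j : ℝ) ^ (-θ)) ^ ν)
      ≤ (η₀^2 * (2/η₀) ^ ν) * ((t:ℝ) ^ (-(ν*(1-θ))) * ∑ k ∈ Finset.Icc 1 t, (k:ℝ) ^ (-(2*θ)))
        + (η₀^2 * 2 ^ (2*θ)) * ((t:ℝ) ^ (-(2*θ)) *
            (1 + ∑ m ∈ Finset.Icc 1 t, (1 + (η₀ * (t:ℝ) ^ (-θ) * (m:ℝ)) ^ ν)⁻¹)) := h
  _ = _ := by ring

lemma cellN1 (η₀ θ ν : ℝ) (hη₀ : 0 < η₀) (hθ : 0 < θ) (hθ1 : θ < 1) (hν : 0 < ν)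
    (hθc : θ < 1/2) (hνc : ν < 1) :
    ∃ C : ℝ, 0 < C ∧ ∀ t : ℕ, 1 ≤ t →
      ∑ k ∈ Finset.Icc 1 t, (η₀ * (k : ℝ) ^ (-θ)) ^ 2 /
          (1 + (∑ j ∈ Finset.Icc (k + 1) t, η₀ * (j : ℝ) ^ (-θ)) ^ ν)
        ≤ C * ((t : ℝ) + 1) ^ rateExp ν θ := by
  have hw : rateExp ν θ = 1 - 2*θ - ν + ν*θ := by
    unfold rateExp
    rw [if_pos ⟨le_of_lt hνc, by linarith⟩]
  set w : ℝ := 1 - 2*θ - ν + ν*θ with hwdef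
  set cH : ℝ := η₀^2 * (2/η₀) ^ ν with hcH
  set cT : ℝ := η₀^2 * 2 ^ (2*θ) with hcT
  have hcH0 : 0 ≤ cH := by positivity
  have hcT0 : 0 ≤ cT := by positivity
  set aA : ℝ := cH * (1/(1-2*θ)) * (1 + 2 ^ (-w)) with haA
  set aB : ℝ := cT * (1 + 2 ^ (-w)) with haB
  set aC : ℝ := cT * (η₀ ^ (-ν) / (1-ν)) * (1 + 2 ^ (-w)) with haC
  refine ⟨|aA + aB + aC| + 1, by positivity, ?_⟩
  intro t ht
  rw [hw]
  have hx : (1:ℝ) ≤ (t:ℝ) := by exact_mod_cast ht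
  have hx0 : (0:ℝ) < (t:ℝ) := by linarith
  have hkey := key_bound' η₀ θ ν hη₀ hθ hθ1 hν t ht
  have hKP0 : (0:ℝ) ≤ 1/(1-2*θ) := by
    have : (0:ℝ) < 1-2*θ := by linarith
    positivity
  have hKQ0 : (0:ℝ) ≤ η₀ ^ (-ν) / (1-ν) := by
    have : (0:ℝ) < 1-ν := by linarith
    positivity
  have hA := le_trans
    (combA (e := -(ν*(1-θ))) hx0 hcH0 hKP0 (Pcase1 hθ hθc t))
    (tb1 (e := -(ν*(1-θ)) + (1-2*θ)) (w := w) hx (mul_nonneg hcH0 hKP0)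
      (le_of_eq (by rw [hwdef]; ring)))
  have hB := tb1 (K := cT) (e := -(2*θ)) (w := w) hx hcT0
    (by rw [hwdef]; nlinarith [mul_nonneg (le_of_lt hν) (le_of_lt hθ)])
  have hC := le_trans
    (combA (e := -(2*θ)) hx0 hcT0 hKQ0 (Qcase1 hη₀ hν hνc t ht))
    (tb1 (e := -(2*θ) + (θ*ν + (1-ν))) (w := w) hx (mul_nonneg hcT0 hKQ0)
      (le_of_eq (by rw [hwdef]; ring)))
  exact finish3' hkey hA hB hC (by positivity)

lemma cellN3 (η₀ θ ν : ℝ) (hη₀ : 0 < η₀) (hθ : 0 < θ) (hθ1 : θ < 1) (hν : 0 < ν)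
    (hθc : θ < 1/2) (hνc : 1 < ν) :
    ∃ C : ℝ, 0 < C ∧ ∀ t : ℕ, 1 ≤ t →
      ∑ k ∈ Finset.Icc 1 t, (η₀ * (k : ℝ) ^ (-θ)) ^ 2 /
          (1 + (∑ j ∈ Finset.Icc (k + 1) t, η₀ * (j : ℝ) ^ (-θ)) ^ ν)
        ≤ C * ((t : ℝ) + 1) ^ rateExp ν θ := by
  have hw : rateExp ν θ = -θ := by
    unfold rateExp
    rw [if_neg (fun h => absurd h.1 (by linarith)), if_pos ⟨by linarith, by
      rw [le_div_iff₀ (by linarith : (0:ℝ) < ν+1)]; nlinarith⟩]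
  set w : ℝ := -θ with hwdef
  set cH : ℝ := η₀^2 * (2/η₀) ^ ν with hcH
  set cT : ℝ := η₀^2 * 2 ^ (2*θ) with hcT
  have hcH0 : 0 ≤ cH := by positivity
  have hcT0 : 0 ≤ cT := by positivity
  have hKP0 : (0:ℝ) ≤ 1/(1-2*θ) := by
    have : (0:ℝ) < 1-2*θ := by linarith
    positivity
  have hKQ0 : (0:ℝ) ≤ 2 ^ ν * η₀⁻¹ / (ν - 1) := by
    have : (0:ℝ) < ν - 1 := by linarith
    positivity
  refine ⟨|cH * (1/(1-2*θ)) * (1 + 2 ^ (-w)) + cT * (1 + 2 ^ (-w))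
    + cT * (2 ^ ν * η₀⁻¹ / (ν - 1)) * (1 + 2 ^ (-w))| + 1, by positivity, ?_⟩
  intro t ht
  rw [hw]
  have hx : (1:ℝ) ≤ (t:ℝ) := by exact_mod_cast ht
  have hx0 : (0:ℝ) < (t:ℝ) := by linarith
  have hkey := key_bound' η₀ θ ν hη₀ hθ hθ1 hν t ht
  have hA := le_trans
    (combA (e := -(ν*(1-θ))) hx0 hcH0 hKP0 (Pcase1 hθ hθc t))
    (tb1 (e := -(ν*(1-θ)) + (1-2*θ)) (w := w) hx (mul_nonneg hcH0 hKP0)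
      (by rw [hwdef]; nlinarith [mul_nonneg (a := ν-1) (b := 1-θ) (by linarith) (by linarith)]))
  have hB := tb1 (K := cT) (e := -(2*θ)) (w := w) hx hcT0 (by rw [hwdef]; linarith)
  have hC := le_trans
    (combA (e := -(2*θ)) hx0 hcT0 hKQ0 (Qcase3 hη₀ hνc t ht))
    (tb1 (e := -(2*θ) + θ) (w := w) hx (mul_nonneg hcT0 hKQ0)
      (le_of_eq (by rw [hwdef]; ring)))
  exact finish3' hkey hA hB hC (by positivity)

lemma cellN7 (η₀ θ ν : ℝ) (hη₀ : 0 < η₀) (hθ : 0 < θ) (hθ1 : θ < 1) (hν : 0 < ν)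
    (hθc : 1/2 < θ) (hνc : ν < 1) :
    ∃ C : ℝ, 0 < C ∧ ∀ t : ℕ, 1 ≤ t →
      ∑ k ∈ Finset.Icc 1 t, (η₀ * (k : ℝ) ^ (-θ)) ^ 2 /
          (1 + (∑ j ∈ Finset.Icc (k + 1) t, η₀ * (j : ℝ) ^ (-θ)) ^ ν)
        ≤ C * ((t : ℝ) + 1) ^ rateExp ν θ := by
  have hw : rateExp ν θ = -ν*(1-θ) := by
    unfold rateExp
    rw [if_neg (fun h => absurd h.2 (by linarith)), if_neg (fun h => absurd h.1 (by linarith))]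
  set w : ℝ := -ν*(1-θ) with hwdef
  set cH : ℝ := η₀^2 * (2/η₀) ^ ν with hcH
  set cT : ℝ := η₀^2 * 2 ^ (2*θ) with hcT
  have hcH0 : 0 ≤ cH := by positivity
  have hcT0 : 0 ≤ cT := by positivity
  have hKP0 : (0:ℝ) ≤ 1 + 1/(2*θ-1) := by
    have : (0:ℝ) < 2*θ-1 := by linarith
    positivity
  have hKQ0 : (0:ℝ) ≤ η₀ ^ (-ν) / (1-ν) := by
    have : (0:ℝ) < 1-ν := by linarith
    positivity
  refine ⟨|cH * (1 + 1/(2*θ-1)) * (1 + 2 ^ (-w)) + cT * (1 + 2 ^ (-w))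
    + cT * (η₀ ^ (-ν) / (1-ν)) * (1 + 2 ^ (-w))| + 1, by positivity, ?_⟩
  intro t ht
  rw [hw]
  have hx : (1:ℝ) ≤ (t:ℝ) := by exact_mod_cast ht
  have hx0 : (0:ℝ) < (t:ℝ) := by linarith
  have hkey := key_bound' η₀ θ ν hη₀ hθ hθ1 hν t ht
  have hA := le_trans
    (combA (e := -(ν*(1-θ))) hx0 hcH0 hKP0 (Pcase3 hθc t))
    (tb1 (e := -(ν*(1-θ)) + 0) (w := w) hx (mul_nonneg hcH0 hKP0)
      (le_of_eq (by rw [hwdef]; ring)))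
  have hB := tb1 (K := cT) (e := -(2*θ)) (w := w) hx hcT0
    (by rw [hwdef]; nlinarith [mul_nonneg (a := 1-ν) (b := 1-θ) (by linarith) (by linarith)])
  have hC := le_trans
    (combA (e := -(2*θ)) hx0 hcT0 hKQ0 (Qcase1 hη₀ hν hνc t ht))
    (tb1 (e := -(2*θ) + (θ*ν + (1-ν))) (w := w) hx (mul_nonneg hcT0 hKQ0)
      (by rw [hwdef]; nlinarith))
  exact finish3' hkey hA hB hC (by positivity)

lemma cellN9 (η₀ θ ν : ℝ) (hη₀ : 0 < η₀) (hθ : 0 < θ) (hθ1 : θ < 1) (hν : 0 < ν)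
    (hθc : 1/2 < θ) (hνc : 1 < ν) :
    ∃ C : ℝ, 0 < C ∧ ∀ t : ℕ, 1 ≤ t →
      ∑ k ∈ Finset.Icc 1 t, (η₀ * (k : ℝ) ^ (-θ)) ^ 2 /
          (1 + (∑ j ∈ Finset.Icc (k + 1) t, η₀ * (j : ℝ) ^ (-θ)) ^ ν)
        ≤ C * ((t : ℝ) + 1) ^ rateExp ν θ := by
  have hws : -(ν*(1-θ)) ≤ rateExp ν θ ∧ -θ ≤ rateExp ν θ := by
    unfold rateExp
    rw [if_neg (fun h => absurd h.2 (by linarith))]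
    by_cases hc : θ ≤ ν/(ν+1)
    · rw [if_pos ⟨by linarith, hc⟩]
      have h2 : θ*(ν+1) ≤ ν := by
        rw [← le_div_iff₀ (by linarith : (0:ℝ) < ν+1)]
        exact hc
      exact ⟨by nlinarith, le_of_eq (by ring)⟩
    · rw [if_neg (fun h => hc h.2)]
      have h2 : ν < θ*(ν+1) := by
        rw [← div_lt_iff₀ (by linarith : (0:ℝ) < ν+1)]
        exact lt_of_not_ge hc
      exact ⟨le_of_eq (by ring), by nlinarith⟩
  set w : ℝ := rateExp ν θ with hwdef
  set cH : ℝ := η₀^2 * (2/η₀) ^ ν with hcH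
  set cT : ℝ := η₀^2 * 2 ^ (2*θ) with hcT
  have hcH0 : 0 ≤ cH := by positivity
  have hcT0 : 0 ≤ cT := by positivity
  have hKP0 : (0:ℝ) ≤ 1 + 1/(2*θ-1) := by
    have : (0:ℝ) < 2*θ-1 := by linarith
    positivity
  have hKQ0 : (0:ℝ) ≤ 2 ^ ν * η₀⁻¹ / (ν - 1) := by
    have : (0:ℝ) < ν - 1 := by linarith
    positivity
  refine ⟨|cH * (1 + 1/(2*θ-1)) * (1 + 2 ^ (-w)) + cT * (1 + 2 ^ (-w))
    + cT * (2 ^ ν * η₀⁻¹ / (ν - 1)) * (1 + 2 ^ (-w))| + 1, by positivity, ?_⟩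
  intro t ht
  have hx : (1:ℝ) ≤ (t:ℝ) := by exact_mod_cast ht
  have hx0 : (0:ℝ) < (t:ℝ) := by linarith
  have hkey := key_bound' η₀ θ ν hη₀ hθ hθ1 hν t ht
  have hA := le_trans
    (combA (e := -(ν*(1-θ))) hx0 hcH0 hKP0 (Pcase3 hθc t))
    (tb1 (e := -(ν*(1-θ)) + 0) (w := w) hx (mul_nonneg hcH0 hKP0)
      (by rw [add_zero]; exact hws.1))
  have hB := tb1 (K := cT) (e := -(2*θ)) (w := w) hx hcT0 (by linarith [hws.2])
  have hC := le_trans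
    (combA (e := -(2*θ)) hx0 hcT0 hKQ0 (Qcase3 hη₀ hνc t ht))
    (tb1 (e := -(2*θ) + θ) (w := w) hx (mul_nonneg hcT0 hKQ0) (by linarith [hws.2]))
  exact finish3' hkey hA hB hC (by positivity)

lemma cellN6 (η₀ θ ν : ℝ) (hη₀ : 0 < η₀) (hθ : 0 < θ) (hθ1 : θ < 1) (hν : 0 < ν)
    (hθc : θ = 1/2) (hνc : 1 < ν) :
    ∃ C : ℝ, 0 < C ∧ ∀ t : ℕ, 1 ≤ t →
      ∑ k ∈ Finset.Icc 1 t, (η₀ * (k : ℝ) ^ (-θ)) ^ 2 /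
          (1 + (∑ j ∈ Finset.Icc (k + 1) t, η₀ * (j : ℝ) ^ (-θ)) ^ ν)
        ≤ C * ((t : ℝ) + 1) ^ rateExp ν θ := by
  subst hθc
  have hw : rateExp ν (1/2) = -(1/2) := by
    unfold rateExp
    rw [if_neg (fun h => absurd h.1 (by linarith)), if_pos ⟨by linarith, by
      rw [le_div_iff₀ (by linarith : (0:ℝ) < ν+1)]; nlinarith⟩]
  set cH : ℝ := η₀^2 * (2/η₀) ^ ν with hcH
  set cT : ℝ := η₀^2 * 2 ^ (2*(1/2:ℝ)) with hcT
  have hcH0 : 0 ≤ cH := by positivity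
  have hcT0 : 0 ≤ cT := by positivity
  have hε : (0:ℝ) < (ν-1)/2 := by linarith
  have hKQ0 : (0:ℝ) ≤ 2 ^ ν * η₀⁻¹ / (ν - 1) := by
    have : (0:ℝ) < ν - 1 := by linarith
    positivity
  refine ⟨|cH * 1 * (1 + 1/((ν-1)/2)) * (1 + 2 ^ (-(-(1/2:ℝ)))) + cT * (1 + 2 ^ (-(-(1/2:ℝ))))
    + cT * (2 ^ ν * η₀⁻¹ / (ν - 1)) * (1 + 2 ^ (-(-(1/2:ℝ))))| + 1, by positivity, ?_⟩
  intro t ht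
  rw [hw]
  have hx : (1:ℝ) ≤ (t:ℝ) := by exact_mod_cast ht
  have hx0 : (0:ℝ) < (t:ℝ) := by linarith
  have hkey := key_bound' η₀ (1/2) ν hη₀ (by norm_num) (by norm_num) hν t ht
  have hA := le_trans
    (combAlog (e := -(ν*(1-1/2))) hx hcH0 zero_le_one (Pcase2 t))
    (tb3 (e := -(ν*(1-1/2)) + 0) (w := -(1/2:ℝ)) (ε := (ν-1)/2) hx
      (mul_nonneg hcH0 zero_le_one) hε (le_of_eq (by ring)))
  have hB := tb1 (K := cT) (e := -(2*(1/2:ℝ))) (w := -(1/2:ℝ)) hx hcT0 (by norm_num)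
  have hC := le_trans
    (combA (e := -(2*(1/2:ℝ))) hx0 hcT0 hKQ0 (Qcase3 hη₀ hνc t ht))
    (tb1 (e := -(2*(1/2:ℝ)) + (1/2)) (w := -(1/2:ℝ)) hx (mul_nonneg hcT0 hKQ0)
      (le_of_eq (by norm_num)))
  exact finish3' hkey hA hB hC (by positivity)

lemma cellN8 (η₀ θ ν : ℝ) (hη₀ : 0 < η₀) (hθ : 0 < θ) (hθ1 : θ < 1) (hν : 0 < ν)
    (hθc : 1/2 < θ) (hνc : ν = 1) :
    ∃ C : ℝ, 0 < C ∧ ∀ t : ℕ, 1 ≤ t →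
      ∑ k ∈ Finset.Icc 1 t, (η₀ * (k : ℝ) ^ (-θ)) ^ 2 /
          (1 + (∑ j ∈ Finset.Icc (k + 1) t, η₀ * (j : ℝ) ^ (-θ)) ^ ν)
        ≤ C * ((t : ℝ) + 1) ^ rateExp ν θ := by
  subst hνc
  have hw : rateExp 1 θ = -1*(1-θ) := by
    unfold rateExp
    rw [if_neg (fun h => absurd h.2 (by linarith)), if_neg (fun h => by
      have h2 := h.2
      norm_num at h2
      linarith)]
  set w : ℝ := -1*(1-θ) with hwdef
  set cH : ℝ := η₀^2 * (2/η₀) ^ (1:ℝ) with hcH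
  set cT : ℝ := η₀^2 * 2 ^ (2*θ) with hcT
  have hcH0 : 0 ≤ cH := by positivity
  have hcT0 : 0 ≤ cT := by positivity
  have hε : (0:ℝ) < 2*θ-1 := by linarith
  have hKP0 : (0:ℝ) ≤ 1 + 1/(2*θ-1) := by positivity
  have hKQ0 : (0:ℝ) ≤ η₀⁻¹ := by positivity
  refine ⟨|cH * (1 + 1/(2*θ-1)) * (1 + 2 ^ (-w)) + cT * (1 + 2 ^ (-w))
    + cT * η₀⁻¹ * (1 + 1/(2*θ-1)) * (1 + 2 ^ (-w))| + 1, by positivity, ?_⟩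
  intro t ht
  rw [hw]
  have hx : (1:ℝ) ≤ (t:ℝ) := by exact_mod_cast ht
  have hx0 : (0:ℝ) < (t:ℝ) := by linarith
  have hkey := key_bound' η₀ θ 1 hη₀ hθ hθ1 (by norm_num) t ht
  have hA := le_trans
    (combA (e := -(1*(1-θ))) hx0 hcH0 hKP0 (Pcase3 hθc t))
    (tb1 (e := -(1*(1-θ)) + 0) (w := w) hx (mul_nonneg hcH0 hKP0)
      (le_of_eq (by rw [hwdef]; ring)))
  have hB := tb1 (K := cT) (e := -(2*θ)) (w := w) hx hcT0 (by rw [hwdef]; linarith)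
  have hC := le_trans
    (combAlog (e := -(2*θ)) hx hcT0 hKQ0 (Qcase2 hη₀ t ht))
    (tb3 (e := -(2*θ) + θ) (w := w) (ε := 2*θ-1) hx (mul_nonneg hcT0 hKQ0) hε
      (le_of_eq (by rw [hwdef]; ring)))
  exact finish3' hkey hA hB hC (by positivity)

lemma cellL1 (η₀ θ ν : ℝ) (hη₀ : 0 < η₀) (hθ : 0 < θ) (hθ1 : θ < 1) (hν : 0 < ν)
    (hθc : θ = 1/2) (hνc : ν < 1) :
    ∃ C : ℝ, 0 < C ∧ ∀ t : ℕ, 1 ≤ t →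
      ∑ k ∈ Finset.Icc 1 t, (η₀ * (k : ℝ) ^ (-θ)) ^ 2 /
          (1 + (∑ j ∈ Finset.Icc (k + 1) t, η₀ * (j : ℝ) ^ (-θ)) ^ ν)
        ≤ C * ((t : ℝ) + 1) ^ rateExp ν θ * Real.log ((t : ℝ) + 1) := by
  subst hθc
  have hw : rateExp ν (1/2) = 1 - 2*(1/2) - ν + ν*(1/2) := by
    unfold rateExp
    rw [if_pos ⟨le_of_lt hνc, le_refl _⟩]
  set w : ℝ := 1 - 2*(1/2) - ν + ν*(1/2) with hwdef
  set cH : ℝ := η₀^2 * (2/η₀) ^ ν with hcH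
  set cT : ℝ := η₀^2 * 2 ^ (2*(1/2:ℝ)) with hcT
  have hcH0 : 0 ≤ cH := by positivity
  have hcT0 : 0 ≤ cT := by positivity
  have hKQ0 : (0:ℝ) ≤ η₀ ^ (-ν) / (1-ν) := by
    have : (0:ℝ) < 1-ν := by linarith
    positivity
  refine ⟨|3 * (cH * 1) * (1 + 2 ^ (-w)) + 2 * (cT * (1 + 2 ^ (-w)))
    + 2 * (cT * (η₀ ^ (-ν) / (1-ν)) * (1 + 2 ^ (-w)))| + 1, by positivity, ?_⟩
  intro t ht
  rw [hw]
  have hx : (1:ℝ) ≤ (t:ℝ) := by exact_mod_cast ht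
  have hx0 : (0:ℝ) < (t:ℝ) := by linarith
  have hkey := key_bound' η₀ (1/2) ν hη₀ (by norm_num) (by norm_num) hν t ht
  have hlog0 : (0:ℝ) ≤ Real.log ((t:ℝ)+1) := Real.log_nonneg (by linarith)
  have hT0 : (0:ℝ) ≤ ((t:ℝ)+1) ^ w * Real.log ((t:ℝ)+1) :=
    mul_nonneg (by positivity) hlog0
  have hA := le_trans
    (combAlog (e := -(ν*(1-1/2))) hx hcH0 zero_le_one (Pcase2 t))
    (tb2 (e := -(ν*(1-1/2)) + 0) (w := w) hx (mul_nonneg hcH0 zero_le_one)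
      (le_of_eq (by rw [hwdef]; ring)))
  have hB := le_trans
    (tb1 (K := cT) (e := -(2*(1/2:ℝ))) (w := w) hx hcT0 (by rw [hwdef]; linarith))
    (tb4 (c := cT * (1 + 2 ^ (-w))) hx (by positivity))
  have hC := le_trans (le_trans
    (combA (e := -(2*(1/2:ℝ))) hx0 hcT0 hKQ0 (Qcase1 hη₀ hν hνc t ht))
    (tb1 (e := -(2*(1/2:ℝ)) + ((1/2)*ν + (1-ν))) (w := w) hx (mul_nonneg hcT0 hKQ0)
      (le_of_eq (by rw [hwdef]; ring))))
    (tb4 (c := cT * (η₀ ^ (-ν) / (1-ν)) * (1 + 2 ^ (-w))) hx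
      (by positivity))
  have hfin := finish3' hkey hA hB hC hT0
  calc ∑ k ∈ Finset.Icc 1 t, (η₀ * (k : ℝ) ^ (-(1/2:ℝ))) ^ 2 /
        (1 + (∑ j ∈ Finset.Icc (k + 1) t, η₀ * (j : ℝ) ^ (-(1/2:ℝ))) ^ ν)
      ≤ _ := hfin
  _ = (|3 * (cH * 1) * (1 + 2 ^ (-w)) + 2 * (cT * (1 + 2 ^ (-w)))
    + 2 * (cT * (η₀ ^ (-ν) / (1-ν)) * (1 + 2 ^ (-w)))| + 1) * ((t:ℝ)+1) ^ w
      * Real.log ((t:ℝ)+1) := by ring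

lemma cellL2 (η₀ θ ν : ℝ) (hη₀ : 0 < η₀) (hθ : 0 < θ) (hθ1 : θ < 1) (hν : 0 < ν)
    (hθc : θ < 1/2) (hνc : ν = 1) :
    ∃ C : ℝ, 0 < C ∧ ∀ t : ℕ, 1 ≤ t →
      ∑ k ∈ Finset.Icc 1 t, (η₀ * (k : ℝ) ^ (-θ)) ^ 2 /
          (1 + (∑ j ∈ Finset.Icc (k + 1) t, η₀ * (j : ℝ) ^ (-θ)) ^ ν)
        ≤ C * ((t : ℝ) + 1) ^ rateExp ν θ * Real.log ((t : ℝ) + 1) := by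
  subst hνc
  have hw : rateExp 1 θ = 1 - 2*θ - 1 + 1*θ := by
    unfold rateExp
    rw [if_pos ⟨le_refl _, by linarith⟩]
  set w : ℝ := 1 - 2*θ - 1 + 1*θ with hwdef
  set cH : ℝ := η₀^2 * (2/η₀) ^ (1:ℝ) with hcH
  set cT : ℝ := η₀^2 * 2 ^ (2*θ) with hcT
  have hcH0 : 0 ≤ cH := by positivity
  have hcT0 : 0 ≤ cT := by positivity
  have hKP0 : (0:ℝ) ≤ 1/(1-2*θ) := by
    have : (0:ℝ) < 1-2*θ := by linarith
    positivity
  have hKQ0 : (0:ℝ) ≤ η₀⁻¹ := by positivity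
  refine ⟨|2 * (cH * (1/(1-2*θ)) * (1 + 2 ^ (-w))) + 2 * (cT * (1 + 2 ^ (-w)))
    + 3 * (cT * η₀⁻¹) * (1 + 2 ^ (-w))| + 1, by positivity, ?_⟩
  intro t ht
  rw [hw]
  have hx : (1:ℝ) ≤ (t:ℝ) := by exact_mod_cast ht
  have hx0 : (0:ℝ) < (t:ℝ) := by linarith
  have hkey := key_bound' η₀ θ 1 hη₀ hθ hθ1 (by norm_num) t ht
  have hlog0 : (0:ℝ) ≤ Real.log ((t:ℝ)+1) := Real.log_nonneg (by linarith)
  have hT0 : (0:ℝ) ≤ ((t:ℝ)+1) ^ w * Real.log ((t:ℝ)+1) :=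
    mul_nonneg (by positivity) hlog0
  have hA := le_trans (le_trans
    (combA (e := -(1*(1-θ))) hx0 hcH0 hKP0 (Pcase1 hθ hθc t))
    (tb1 (e := -(1*(1-θ)) + (1-2*θ)) (w := w) hx (mul_nonneg hcH0 hKP0)
      (le_of_eq (by rw [hwdef]; ring))))
    (tb4 (c := cH * (1/(1-2*θ)) * (1 + 2 ^ (-w))) hx (by positivity))
  have hB := le_trans
    (tb1 (K := cT) (e := -(2*θ)) (w := w) hx hcT0 (by rw [hwdef]; linarith))
    (tb4 (c := cT * (1 + 2 ^ (-w))) hx (by positivity))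
  have hC := le_trans
    (combAlog (e := -(2*θ)) hx hcT0 hKQ0 (Qcase2 hη₀ t ht))
    (tb2 (e := -(2*θ) + θ) (w := w) hx (mul_nonneg hcT0 hKQ0)
      (le_of_eq (by rw [hwdef]; ring)))
  have hfin := finish3' hkey hA hB hC hT0
  calc ∑ k ∈ Finset.Icc 1 t, (η₀ * (k : ℝ) ^ (-θ)) ^ 2 /
        (1 + (∑ j ∈ Finset.Icc (k + 1) t, η₀ * (j : ℝ) ^ (-θ)) ^ (1:ℝ))
      ≤ _ := hfin
  _ = (|2 * (cH * (1/(1-2*θ)) * (1 + 2 ^ (-w))) + 2 * (cT * (1 + 2 ^ (-w)))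
    + 3 * (cT * η₀⁻¹) * (1 + 2 ^ (-w))| + 1) * ((t:ℝ)+1) ^ w * Real.log ((t:ℝ)+1) := by ring

lemma cellL3 (η₀ θ ν : ℝ) (hη₀ : 0 < η₀) (hθ : 0 < θ) (hθ1 : θ < 1) (hν : 0 < ν)
    (hθc : θ = 1/2) (hνc : ν = 1) :
    ∃ C : ℝ, 0 < C ∧ ∀ t : ℕ, 1 ≤ t →
      ∑ k ∈ Finset.Icc 1 t, (η₀ * (k : ℝ) ^ (-θ)) ^ 2 /
          (1 + (∑ j ∈ Finset.Icc (k + 1) t, η₀ * (j : ℝ) ^ (-θ)) ^ ν)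
        ≤ C * ((t : ℝ) + 1) ^ rateExp ν θ * Real.log ((t : ℝ) + 1) := by
  subst hθc
  subst hνc
  have hw : rateExp 1 (1/2) = 1 - 2*(1/2) - 1 + 1*(1/2) := by
    unfold rateExp
    rw [if_pos ⟨le_refl _, le_refl _⟩]
  set w : ℝ := 1 - 2*(1/2:ℝ) - 1 + 1*(1/2) with hwdef
  set cH : ℝ := η₀^2 * (2/η₀) ^ (1:ℝ) with hcH
  set cT : ℝ := η₀^2 * 2 ^ (2*(1/2:ℝ)) with hcT
  have hcH0 : 0 ≤ cH := by positivity
  have hcT0 : 0 ≤ cT := by positivity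
  have hKQ0 : (0:ℝ) ≤ η₀⁻¹ := by positivity
  refine ⟨|3 * (cH * 1) * (1 + 2 ^ (-w)) + 2 * (cT * (1 + 2 ^ (-w)))
    + 3 * (cT * η₀⁻¹) * (1 + 2 ^ (-w))| + 1, by positivity, ?_⟩
  intro t ht
  rw [hw]
  have hx : (1:ℝ) ≤ (t:ℝ) := by exact_mod_cast ht
  have hx0 : (0:ℝ) < (t:ℝ) := by linarith
  have hkey := key_bound' η₀ (1/2) 1 hη₀ (by norm_num) (by norm_num) (by norm_num) t ht
  have hlog0 : (0:ℝ) ≤ Real.log ((t:ℝ)+1) := Real.log_nonneg (by linarith)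
  have hT0 : (0:ℝ) ≤ ((t:ℝ)+1) ^ w * Real.log ((t:ℝ)+1) :=
    mul_nonneg (by positivity) hlog0
  have hA := le_trans
    (combAlog (e := -(1*(1-1/2))) hx hcH0 zero_le_one (Pcase2 t))
    (tb2 (e := -(1*(1-1/2)) + 0) (w := w) hx (mul_nonneg hcH0 zero_le_one)
      (le_of_eq (by rw [hwdef]; ring)))
  have hB := le_trans
    (tb1 (K := cT) (e := -(2*(1/2:ℝ))) (w := w) hx hcT0 (by rw [hwdef]; norm_num))
    (tb4 (c := cT * (1 + 2 ^ (-w))) hx (by positivity))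
  have hC := le_trans
    (combAlog (e := -(2*(1/2:ℝ))) hx hcT0 hKQ0 (Qcase2 hη₀ t ht))
    (tb2 (e := -(2*(1/2:ℝ)) + (1/2)) (w := w) hx (mul_nonneg hcT0 hKQ0)
      (le_of_eq (by rw [hwdef]; ring)))
  have hfin := finish3' hkey hA hB hC hT0
  calc ∑ k ∈ Finset.Icc 1 t, (η₀ * (k : ℝ) ^ (-(1/2:ℝ))) ^ 2 /
        (1 + (∑ j ∈ Finset.Icc (k + 1) t, η₀ * (j : ℝ) ^ (-(1/2:ℝ))) ^ (1:ℝ))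
      ≤ _ := hfin
  _ = (|3 * (cH * 1) * (1 + 2 ^ (-w)) + 2 * (cT * (1 + 2 ^ (-w)))
    + 3 * (cT * η₀⁻¹) * (1 + 2 ^ (-w))| + 1) * ((t:ℝ)+1) ^ w * Real.log ((t:ℝ)+1) := by ring


end helpers

/-- For step-sizes `η_k = η₀ k^{-θ}` with `η₀ > 0`, `0 < θ < 1`, and `ν > 0`,
there is a constant `C > 0` independent of `t` such that for every `t ≥ 1`,
`Σ_{k=1}^t η_k²/(1 + (Σ_{j=k+1}^t η_j)^ν)` is bounded by `C·(t+1)^ω·log(t+1)`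
when `(ν,θ) ∈ Ω`, and by `C·(t+1)^ω` otherwise. -/
theorem stmt13 (η₀ θ ν : ℝ) (hη₀ : 0 < η₀) (hθ : 0 < θ) (hθ1 : θ < 1)
    (hν : 0 < ν) :
    ∃ C : ℝ, 0 < C ∧ ∀ t : ℕ, 1 ≤ t →
      (((ν, θ) ∈ logSet →
          ∑ k ∈ Finset.Icc 1 t, (η₀ * (k : ℝ) ^ (-θ)) ^ 2 /
              (1 + (∑ j ∈ Finset.Icc (k + 1) t, η₀ * (j : ℝ) ^ (-θ)) ^ ν)
            ≤ C * ((t : ℝ) + 1) ^ rateExp ν θ * Real.log ((t : ℝ) + 1)) ∧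
        ((ν, θ) ∉ logSet →
          ∑ k ∈ Finset.Icc 1 t, (η₀ * (k : ℝ) ^ (-θ)) ^ 2 /
              (1 + (∑ j ∈ Finset.Icc (k + 1) t, η₀ * (j : ℝ) ^ (-θ)) ^ ν)
            ≤ C * ((t : ℝ) + 1) ^ rateExp ν θ)) := by
  rcases lt_trichotomy θ (1/2 : ℝ) with hθc | hθc | hθc
  · rcases lt_trichotomy ν (1 : ℝ) with hνc | hνc | hνc
    · obtain ⟨C, hC, hS⟩ := cellN1 η₀ θ ν hη₀ hθ hθ1 hν hθc hνc
      have hnm : (ν, θ) ∉ logSet := by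
        intro hm
        simp only [logSet, Set.mem_setOf_eq] at hm
        rcases hm with ⟨h1, h2, h3⟩ | ⟨h1, h2, h3⟩ <;> linarith
      exact ⟨C, hC, fun t ht => ⟨fun hm => absurd hm hnm, fun _ => hS t ht⟩⟩
    · obtain ⟨C, hC, hS⟩ := cellL2 η₀ θ ν hη₀ hθ hθ1 hν hθc hνc
      have hm : (ν, θ) ∈ logSet := by
        simp only [logSet, Set.mem_setOf_eq]
        exact Or.inr ⟨hνc, hθ, by linarith⟩
      exact ⟨C, hC, fun t ht => ⟨fun _ => hS t ht, fun hnm => absurd hm hnm⟩⟩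
    · obtain ⟨C, hC, hS⟩ := cellN3 η₀ θ ν hη₀ hθ hθ1 hν hθc hνc
      have hnm : (ν, θ) ∉ logSet := by
        intro hm
        simp only [logSet, Set.mem_setOf_eq] at hm
        rcases hm with ⟨h1, h2, h3⟩ | ⟨h1, h2, h3⟩ <;> linarith
      exact ⟨C, hC, fun t ht => ⟨fun hm => absurd hm hnm, fun _ => hS t ht⟩⟩
  · rcases lt_trichotomy ν (1 : ℝ) with hνc | hνc | hνc
    · obtain ⟨C, hC, hS⟩ := cellL1 η₀ θ ν hη₀ hθ hθ1 hν hθc hνc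
      have hm : (ν, θ) ∈ logSet := by
        simp only [logSet, Set.mem_setOf_eq]
        exact Or.inl ⟨hν, by linarith, hθc⟩
      exact ⟨C, hC, fun t ht => ⟨fun _ => hS t ht, fun hnm => absurd hm hnm⟩⟩
    · obtain ⟨C, hC, hS⟩ := cellL3 η₀ θ ν hη₀ hθ hθ1 hν hθc hνc
      have hm : (ν, θ) ∈ logSet := by
        simp only [logSet, Set.mem_setOf_eq]
        exact Or.inl ⟨hν, by linarith, hθc⟩
      exact ⟨C, hC, fun t ht => ⟨fun _ => hS t ht, fun hnm => absurd hm hnm⟩⟩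
    · obtain ⟨C, hC, hS⟩ := cellN6 η₀ θ ν hη₀ hθ hθ1 hν hθc hνc
      have hnm : (ν, θ) ∉ logSet := by
        intro hm
        simp only [logSet, Set.mem_setOf_eq] at hm
        rcases hm with ⟨h1, h2, h3⟩ | ⟨h1, h2, h3⟩ <;> linarith
      exact ⟨C, hC, fun t ht => ⟨fun hm => absurd hm hnm, fun _ => hS t ht⟩⟩
  · rcases lt_trichotomy ν (1 : ℝ) with hνc | hνc | hνc
    · obtain ⟨C, hC, hS⟩ := cellN7 η₀ θ ν hη₀ hθ hθ1 hν hθc hνc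
      have hnm : (ν, θ) ∉ logSet := by
        intro hm
        simp only [logSet, Set.mem_setOf_eq] at hm
        rcases hm with ⟨h1, h2, h3⟩ | ⟨h1, h2, h3⟩ <;> linarith
      exact ⟨C, hC, fun t ht => ⟨fun hm => absurd hm hnm, fun _ => hS t ht⟩⟩
    · obtain ⟨C, hC, hS⟩ := cellN8 η₀ θ ν hη₀ hθ hθ1 hν hθc hνc
      have hnm : (ν, θ) ∉ logSet := by
        intro hm
        simp only [logSet, Set.mem_setOf_eq] at hm
        rcases hm with ⟨h1, h2, h3⟩ | ⟨h1, h2, h3⟩ <;> linarith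
      exact ⟨C, hC, fun t ht => ⟨fun hm => absurd hm hnm, fun _ => hS t ht⟩⟩
    · obtain ⟨C, hC, hS⟩ := cellN9 η₀ θ ν hη₀ hθ hθ1 hν hθc hνc
      have hnm : (ν, θ) ∉ logSet := by
        intro hm
        simp only [logSet, Set.mem_setOf_eq] at hm
        rcases hm with ⟨h1, h2, h3⟩ | ⟨h1, h2, h3⟩ <;> linarith
      exact ⟨C, hC, fun t ht => ⟨fun hm => absurd hm hnm, fun _ => hS t ht⟩⟩
end
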